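/- arXiv:1303.0656 — 5 statements merged into one kernel-verified Lean document; each statement's English description precedes it below -/
import Mathlib

section
/- Let μ be a finite complex Borel measure on [0,1) for which t·|μ|([0,1−t)) is bounded as t → 0⁺, and for h ∈ C₀[0,1) define (T_μ h)(t) = t ∫_{[0,1−t)} h(t+s) dμ(s) for t ∈ [0,1]. Then T_μ h is continuous on [0,1] and satisfies (T_μ h)(1) = 0, i.e. T_μ maps C₀[0,1) into C₀[0,1). -/
open MeasureTheory Set Filter Topology

noncomputable section

/-- Integral of a complex-valued function against a complex (Borel) measure,
defined via the Jordan decompositions of the real and imaginary parts. -/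
def cInt {X : Type} [MeasurableSpace X] (μ : ComplexMeasure X) (f : X → ℂ) : ℂ :=
  ((∫ x, f x ∂μ.re.toJordanDecomposition.posPart) -
      ∫ x, f x ∂μ.re.toJordanDecomposition.negPart) +
    Complex.I * ((∫ x, f x ∂μ.im.toJordanDecomposition.posPart) -
      ∫ x, f x ∂μ.im.toJordanDecomposition.negPart)

/-- A (positive) measure playing the role of the total variation `|μ|` of a complex
measure `μ` (it is equivalent to the classical total variation: `|μ| ≤ cTV μ ≤ 2|μ|`). -/
def cTV {X : Type} [MeasurableSpace X] (μ : ComplexMeasure X) : Measure X :=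
  μ.re.totalVariation + μ.im.totalVariation

/-- `μ` is concentrated on the set `A`, i.e. `μ` is a measure "on `A`". -/
def ConcOn {X : Type} [MeasurableSpace X] (μ : ComplexMeasure X) (A : Set X) : Prop :=
  ∀ E : Set X, MeasurableSet E → E ⊆ Aᶜ → μ E = 0

/-- `ρ` is the convolution `(Xν) * μ` of the complex measures `ν, μ` on `[0,1)`,
characterized by `ρ E = ∫∫ 1_E (t+s) t dμ(s) dν(t)` for Borel `E ⊆ [0,1)`. -/
def IsXConv (μ ν ρ : ComplexMeasure ℝ) : Prop :=
  ConcOn ρ (Ico 0 1) ∧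
    ∀ E : Set ℝ, MeasurableSet E → E ⊆ Ico (0 : ℝ) 1 →
      ρ E = cInt ν fun t => (t : ℂ) * cInt μ fun s => E.indicator (1 : ℝ → ℂ) (t + s)

/-- The Jordan decomposition of a restricted signed measure is the restriction of the
Jordan decomposition. -/
lemma toJD_restrict (s : SignedMeasure ℝ) {A : Set ℝ} (hA : MeasurableSet A) :
    SignedMeasure.toJordanDecomposition (s.restrict A) =
      { posPart := s.toJordanDecomposition.posPart.restrict A
        negPart := s.toJordanDecomposition.negPart.restrict A
        mutuallySingular := s.toJordanDecomposition.mutuallySingular.mono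
          Measure.restrict_le_self Measure.restrict_le_self } := by
  apply SignedMeasure.toJordanDecomposition_eq
  ext E hE
  rw [VectorMeasure.restrict_apply _ hA hE,
    JordanDecomposition.toSignedMeasure, Measure.toSignedMeasure_sub_apply hE,
    measureReal_restrict_apply hE, measureReal_restrict_apply hE]
  conv_lhs => rw [← SignedMeasure.toSignedMeasure_toJordanDecomposition s]
  rw [JordanDecomposition.toSignedMeasure, Measure.toSignedMeasure_sub_apply (hE.inter hA)]

lemma re_restrict (μ : ComplexMeasure ℝ) {A : Set ℝ} (hA : MeasurableSet A) :
    ComplexMeasure.re (μ.restrict A) = (ComplexMeasure.re μ).restrict A := by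
  ext E hE
  simp only [ComplexMeasure.re_apply, VectorMeasure.mapRange_apply, VectorMeasure.restrict_apply _ hA hE]
  exact congrArg Complex.re (VectorMeasure.restrict_apply μ hA hE)

lemma im_restrict (μ : ComplexMeasure ℝ) {A : Set ℝ} (hA : MeasurableSet A) :
    ComplexMeasure.im (μ.restrict A) = (ComplexMeasure.im μ).restrict A := by
  ext E hE
  simp only [ComplexMeasure.im_apply, VectorMeasure.mapRange_apply, VectorMeasure.restrict_apply _ hA hE]
  exact congrArg Complex.im (VectorMeasure.restrict_apply μ hA hE)

lemma cInt_restrict (μ : ComplexMeasure ℝ) {A : Set ℝ} (hA : MeasurableSet A) (f : ℝ → ℂ) :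
    cInt (μ.restrict A) f =
      ((∫ x, A.indicator f x ∂(ComplexMeasure.re μ).toJordanDecomposition.posPart) -
          ∫ x, A.indicator f x ∂(ComplexMeasure.re μ).toJordanDecomposition.negPart) +
        Complex.I *
          ((∫ x, A.indicator f x ∂(ComplexMeasure.im μ).toJordanDecomposition.posPart) -
            ∫ x, A.indicator f x ∂(ComplexMeasure.im μ).toJordanDecomposition.negPart) := by
  show cInt (μ.restrict A) f = _
  rw [cInt]
  show ((∫ x, f x ∂(SignedMeasure.toJordanDecomposition
        (ComplexMeasure.re (μ.restrict A))).posPart) - _) + _ = _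
  rw [re_restrict μ hA, im_restrict μ hA, toJD_restrict _ hA, toJD_restrict _ hA]
  simp only [integral_indicator hA]

lemma cont_aux (P : Measure ℝ) [IsFiniteMeasure P] (g : ℝ → ℂ) (hg : Continuous g)
    (hg1 : g 1 = 0) (M : ℝ) (hM : ∀ x, ‖g x‖ ≤ M) :
    Continuous (fun t : ℝ => ∫ s, (Ico (0:ℝ) (1-t)).indicator (fun u => g (t+u)) s ∂P) := by
  rw [continuous_iff_continuousAt]
  intro t₀
  apply tendsto_integral_filter_of_dominated_convergence (fun _ => M)
  · exact Eventually.of_forall fun t =>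
      ((hg.comp (continuous_const.add continuous_id)).aestronglyMeasurable).indicator
        measurableSet_Ico
  · exact Eventually.of_forall fun t => ae_of_all _ fun s =>
      le_trans (norm_indicator_le_norm_self _ _) (hM _)
  · exact integrable_const M
  · apply ae_of_all
    intro s
    have hgs : Tendsto (fun t : ℝ => g (t + s)) (𝓝 t₀) (𝓝 (g (t₀ + s))) :=
      ((hg.comp (continuous_id.add continuous_const)).tendsto t₀)
    rcases lt_or_ge s 0 with hs | hs
    · have hz : ∀ t : ℝ, (Ico (0:ℝ) (1-t)).indicator (fun u => g (t+u)) s = 0 := fun t =>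
        indicator_of_notMem (fun hmem => absurd hmem.1 (not_le.2 hs)) _
      simp only [hz]
      exact tendsto_const_nhds
    rcases lt_trichotomy s (1 - t₀) with hlt | heq | hgt
    · have hev : ∀ᶠ t in 𝓝 t₀, (Ico (0:ℝ) (1-t)).indicator (fun u => g (t+u)) s = g (t + s) := by
        filter_upwards [(isOpen_Iio (a := 1 - s)).eventually_mem
          (show t₀ ∈ Iio (1 - s) by simp only [mem_Iio]; linarith)] with t ht
        exact indicator_of_mem (show s ∈ Ico (0:ℝ) (1-t) from
          ⟨hs, by simp only [mem_Iio] at ht; linarith⟩) _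
      rw [indicator_of_mem (show s ∈ Ico (0:ℝ) (1-t₀) from ⟨hs, hlt⟩)]
      exact hgs.congr' (hev.mono fun t ht => ht.symm)
    · have h0 : (Ico (0:ℝ) (1-t₀)).indicator (fun u => g (t₀+u)) s = 0 :=
        indicator_of_notMem (fun hmem => absurd hmem.2 (by rw [heq]; exact lt_irrefl _)) _
      rw [h0]
      apply squeeze_zero_norm (fun t => norm_indicator_le_norm_self _ _)
      have h1 : g (t₀ + s) = 0 := by
        rw [show t₀ + s = 1 by rw [heq]; ring]; exact hg1
      simpa [h1] using hgs.norm
    · have hev : ∀ᶠ t in 𝓝 t₀, (Ico (0:ℝ) (1-t)).indicator (fun u => g (t+u)) s = 0 := by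
        filter_upwards [(isOpen_Ioi (a := 1 - s)).eventually_mem
          (show t₀ ∈ Ioi (1 - s) by simp only [mem_Ioi]; linarith)] with t ht
        exact indicator_of_notMem
          (fun hmem => absurd hmem.2 (by simp only [mem_Ioi] at ht; linarith)) _
      rw [indicator_of_notMem (fun hmem => absurd hmem.2 (by linarith)) _]
      exact tendsto_const_nhds.congr' (hev.mono fun t ht => ht.symm)

theorem Tmu_maps_C0_into_C0 (μ : ComplexMeasure ℝ)
    (hμc : ConcOn μ (Ico 0 1))
    (hμb : ∃ C δ : ℝ, 0 < δ ∧ ∀ t : ℝ, 0 < t → t < δ →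
      t * (cTV μ (Ico 0 (1 - t))).toReal ≤ C)
    (h : ℝ → ℂ) (hh : ContinuousOn h (Icc 0 1)) (h1 : h 1 = 0) :
    ContinuousOn
        (fun t : ℝ => (t : ℂ) * cInt (μ.restrict (Ico 0 (1 - t))) fun s => h (t + s))
        (Icc 0 1) ∧
      ((1 : ℂ) * cInt (μ.restrict (Ico 0 (1 - (1:ℝ)))) fun s => h (1 + s)) = 0 := by
  -- the continuous "clamped" extension of h
  set g : ℝ → ℂ := fun x => h (min (max x 0) 1) with hg_def
  have hclamp : ∀ x : ℝ, min (max x 0) 1 ∈ Icc (0:ℝ) 1 :=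
    fun x => ⟨le_min (le_max_right _ _) zero_le_one, min_le_right _ _⟩
  have hgc : Continuous g := by
    apply hh.comp_continuous
    · exact (continuous_id.max continuous_const).min continuous_const
    · exact hclamp
  have hg_eq : ∀ x ∈ Icc (0:ℝ) 1, g x = h x := by
    intro x hx
    simp only [hg_def, max_eq_left hx.1, min_eq_left hx.2]
  have hg1 : g 1 = 0 := by rw [hg_eq 1 ⟨zero_le_one, le_refl 1⟩]; exact h1
  obtain ⟨M, hM⟩ := isCompact_Icc.exists_bound_of_continuousOn hh
  have hMg : ∀ x, ‖g x‖ ≤ M := fun x => hM _ (hclamp x)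
  -- key identity on Icc 0 1
  have key : ∀ t ∈ Icc (0:ℝ) 1,
      cInt (μ.restrict (Ico 0 (1 - t))) (fun s => h (t + s)) =
      ((∫ x, (Ico (0:ℝ) (1-t)).indicator (fun u => g (t+u)) x
            ∂(ComplexMeasure.re μ).toJordanDecomposition.posPart) -
          ∫ x, (Ico (0:ℝ) (1-t)).indicator (fun u => g (t+u)) x
            ∂(ComplexMeasure.re μ).toJordanDecomposition.negPart) +
        Complex.I *
          ((∫ x, (Ico (0:ℝ) (1-t)).indicator (fun u => g (t+u)) x
              ∂(ComplexMeasure.im μ).toJordanDecomposition.posPart) -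
            ∫ x, (Ico (0:ℝ) (1-t)).indicator (fun u => g (t+u)) x
              ∂(ComplexMeasure.im μ).toJordanDecomposition.negPart) := by
    intro t ht
    rw [cInt_restrict μ measurableSet_Ico (fun s => h (t + s))]
    have hind : (Ico (0:ℝ) (1-t)).indicator (fun s => h (t + s)) =
        (Ico (0:ℝ) (1-t)).indicator (fun u => g (t+u)) := by
      apply indicator_congr
      intro s hsm
      exact (hg_eq (t + s) ⟨by linarith [ht.1, hsm.1], by linarith [hsm.2]⟩).symm
    rw [hind]
  constructor
  · apply ContinuousOn.congr (f := fun t : ℝ => (t : ℂ) *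
      (((∫ x, (Ico (0:ℝ) (1-t)).indicator (fun u => g (t+u)) x
            ∂(ComplexMeasure.re μ).toJordanDecomposition.posPart) -
          ∫ x, (Ico (0:ℝ) (1-t)).indicator (fun u => g (t+u)) x
            ∂(ComplexMeasure.re μ).toJordanDecomposition.negPart) +
        Complex.I *
          ((∫ x, (Ico (0:ℝ) (1-t)).indicator (fun u => g (t+u)) x
              ∂(ComplexMeasure.im μ).toJordanDecomposition.posPart) -
            ∫ x, (Ico (0:ℝ) (1-t)).indicator (fun u => g (t+u)) x
              ∂(ComplexMeasure.im μ).toJordanDecomposition.negPart)))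
    · apply Continuous.continuousOn
      exact Complex.continuous_ofReal.mul
        (((cont_aux _ g hgc hg1 M hMg).sub (cont_aux _ g hgc hg1 M hMg)).add
          (continuous_const.mul
            ((cont_aux _ g hgc hg1 M hMg).sub (cont_aux _ g hgc hg1 M hMg))))
    · intro t ht
      simp only [key t ht]
  · have : (Ico (0:ℝ) (1 - (1:ℝ))) = (∅ : Set ℝ) := by
      simp
    rw [this, VectorMeasure.restrict_empty]
    show (1:ℂ) * cInt (0 : ComplexMeasure ℝ) _ = 0
    rw [cInt]
    have hre : ComplexMeasure.re (0 : ComplexMeasure ℝ) = 0 := map_zero _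
    have him : ComplexMeasure.im (0 : ComplexMeasure ℝ) = 0 := map_zero _
    rw [hre, him, SignedMeasure.toJordanDecomposition_zero]
    simp
end
end

section
/- Let μ be a finite complex Borel measure on [0,1) for which t·|μ|([0,1−t)) is bounded as t → 0⁺. Then the derivation D̄_μ on M[0,1) given by D̄_μ ν = (Xν)*μ is the Banach-space adjoint of the operator T_μ on C₀[0,1) defined by (T_μ h)(t) = t ∫_{[0,1−t)} h(t+s) dμ(s); in particular D̄_μ is weak-star continuous on M[0,1) = C₀[0,1)*. -/
open MeasureTheory Set Filter Topology

noncomputable section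

namespace CAux
variable {X : Type} [MeasurableSpace X] {σ : ComplexMeasure X} {f g : X → ℂ}

variable {X : Type} [MeasurableSpace X] {σ : ComplexMeasure X} {f g : X → ℂ}

lemma le_cTV1 (σ : ComplexMeasure X) : σ.re.toJordanDecomposition.posPart ≤ cTV σ := by
  refine le_trans ?_ (Measure.le_add_right le_rfl)
  exact Measure.le_add_right le_rfl

lemma le_cTV2 (σ : ComplexMeasure X) : σ.re.toJordanDecomposition.negPart ≤ cTV σ := by
  refine le_trans ?_ (Measure.le_add_right le_rfl)
  exact Measure.le_add_left le_rfl

lemma le_cTV3 (σ : ComplexMeasure X) : σ.im.toJordanDecomposition.posPart ≤ cTV σ := by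
  refine le_trans ?_ (Measure.le_add_left le_rfl)
  exact Measure.le_add_right le_rfl

lemma le_cTV4 (σ : ComplexMeasure X) : σ.im.toJordanDecomposition.negPart ≤ cTV σ := by
  refine le_trans ?_ (Measure.le_add_left le_rfl)
  exact Measure.le_add_left le_rfl

lemma cInt_smul (σ : ComplexMeasure X) (c : ℂ) (f : X → ℂ) :
    cInt σ (fun x => c * f x) = c * cInt σ f := by
  unfold cInt
  simp only [integral_const_mul]
  ring

lemma cInt_add (hf : Integrable f (cTV σ)) (hg : Integrable g (cTV σ)) :
    cInt σ (fun x => f x + g x) = cInt σ f + cInt σ g := by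
  unfold cInt
  rw [integral_add (hf.mono_measure (le_cTV1 σ)) (hg.mono_measure (le_cTV1 σ)),
    integral_add (hf.mono_measure (le_cTV2 σ)) (hg.mono_measure (le_cTV2 σ)),
    integral_add (hf.mono_measure (le_cTV3 σ)) (hg.mono_measure (le_cTV3 σ)),
    integral_add (hf.mono_measure (le_cTV4 σ)) (hg.mono_measure (le_cTV4 σ))]
  ring

lemma cInt_congr_ae (h : f =ᵐ[cTV σ] g) : cInt σ f = cInt σ g := by
  unfold cInt
  rw [integral_congr_ae (Filter.EventuallyEq.filter_mono h (MeasureTheory.ae_mono (le_cTV1 σ))),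
    integral_congr_ae (Filter.EventuallyEq.filter_mono h (MeasureTheory.ae_mono (le_cTV2 σ))),
    integral_congr_ae (Filter.EventuallyEq.filter_mono h (MeasureTheory.ae_mono (le_cTV3 σ))),
    integral_congr_ae (Filter.EventuallyEq.filter_mono h (MeasureTheory.ae_mono (le_cTV4 σ)))]

lemma norm_cInt_le {C : ℝ} (hb : ∀ᵐ x ∂(cTV σ), ‖f x‖ ≤ C) :
    ‖cInt σ f‖ ≤ C * (cTV σ univ).toReal := by
  have h1 := norm_integral_le_of_norm_le_const (hb.filter_mono (MeasureTheory.ae_mono (le_cTV1 σ)))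
  have h2 := norm_integral_le_of_norm_le_const (hb.filter_mono (MeasureTheory.ae_mono (le_cTV2 σ)))
  have h3 := norm_integral_le_of_norm_le_const (hb.filter_mono (MeasureTheory.ae_mono (le_cTV3 σ)))
  have h4 := norm_integral_le_of_norm_le_const (hb.filter_mono (MeasureTheory.ae_mono (le_cTV4 σ)))
  have key : (cTV σ univ).toReal = (σ.re.toJordanDecomposition.posPart univ).toReal
      + (σ.re.toJordanDecomposition.negPart univ).toReal
      + (σ.im.toJordanDecomposition.posPart univ).toReal
      + (σ.im.toJordanDecomposition.negPart univ).toReal := by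
    simp only [cTV, SignedMeasure.totalVariation, Measure.add_apply]
    rw [ENNReal.toReal_add, ENNReal.toReal_add, ENNReal.toReal_add]
    · ring
    all_goals simp [measure_ne_top, ENNReal.add_ne_top]
  calc ‖cInt σ f‖ ≤ ‖(∫ x, f x ∂σ.re.toJordanDecomposition.posPart)‖ +
      ‖(∫ x, f x ∂σ.re.toJordanDecomposition.negPart)‖ +
      ‖(∫ x, f x ∂σ.im.toJordanDecomposition.posPart)‖ +
      ‖(∫ x, f x ∂σ.im.toJordanDecomposition.negPart)‖ := by
        unfold cInt
        refine le_trans (norm_add_le _ _) ?_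
        rw [norm_mul, Complex.norm_I, one_mul]
        have := norm_sub_le (∫ x, f x ∂σ.re.toJordanDecomposition.posPart)
          (∫ x, f x ∂σ.re.toJordanDecomposition.negPart)
        have := norm_sub_le (∫ x, f x ∂σ.im.toJordanDecomposition.posPart)
          (∫ x, f x ∂σ.im.toJordanDecomposition.negPart)
        linarith
    _ ≤ _ := by rw [key]; simp only [measureReal_def] at h1 h2 h3 h4; linarith



lemma sm_apply (s : SignedMeasure X) {E : Set X} (hE : MeasurableSet E) :
    s E = (s.toJordanDecomposition.posPart E).toReal -
      (s.toJordanDecomposition.negPart E).toReal := by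
  conv_lhs => rw [← s.toSignedMeasure_toJordanDecomposition]
  rw [JordanDecomposition.toSignedMeasure, Measure.toSignedMeasure_sub_apply hE]
  rfl

lemma cInt_indicator {E : Set X} (hE : MeasurableSet E) :
    cInt σ (E.indicator (1 : X → ℂ)) = σ E := by
  have h1 : (E.indicator (1 : X → ℂ)) = E.indicator (fun _ => (1:ℂ)) := rfl
  unfold cInt
  simp only [h1, integral_indicator_const (1:ℂ) hE, smul_eq_mul, mul_one]
  have hre : σ.re E = (σ.re.toJordanDecomposition.posPart E).toReal -
      (σ.re.toJordanDecomposition.negPart E).toReal := sm_apply _ hE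
  have him : σ.im E = (σ.im.toJordanDecomposition.posPart E).toReal -
      (σ.im.toJordanDecomposition.negPart E).toReal := sm_apply _ hE
  have h2 : σ E = Complex.mk (σ.re E) (σ.im E) := rfl
  rw [h2, hre, him, Complex.mk_eq_add_mul_I]
  simp only [Complex.real_smul, Complex.ofReal_sub, measureReal_def]
  ring

lemma conc_re {A : Set X} (hA : MeasurableSet A) (hσ : ConcOn σ A) :
    σ.re.totalVariation Aᶜ = 0 := by
  obtain ⟨i, hi₁, hi₂, hi₃, hpos, hneg⟩ := σ.re.toJordanDecomposition_spec
  have h1 : (σ (i ∩ Aᶜ)).re = 0 := by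
    rw [hσ (i ∩ Aᶜ) (hi₁.inter hA.compl) inter_subset_right]; rfl
  have h2 : (σ (iᶜ ∩ Aᶜ)).re = 0 := by
    rw [hσ (iᶜ ∩ Aᶜ) (hi₁.compl.inter hA.compl) inter_subset_right]; rfl
  rw [SignedMeasure.totalVariation, Measure.add_apply, hpos, hneg,
    SignedMeasure.toMeasureOfZeroLE_apply _ _ _ hA.compl,
    SignedMeasure.toMeasureOfLEZero_apply _ _ _ hA.compl]
  simp [NNReal.eq_iff, h1, h2]
  exact ⟨h1, h2⟩

lemma conc_cTV {A : Set X} (hA : MeasurableSet A) (hσ : ConcOn σ A) :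
    cTV σ Aᶜ = 0 := by
  have him : σ.im.totalVariation Aᶜ = 0 := by
    obtain ⟨i, hi₁, hi₂, hi₃, hpos, hneg⟩ := σ.im.toJordanDecomposition_spec
    have h1 : (σ (i ∩ Aᶜ)).im = 0 := by
      rw [hσ (i ∩ Aᶜ) (hi₁.inter hA.compl) inter_subset_right]; rfl
    have h2 : (σ (iᶜ ∩ Aᶜ)).im = 0 := by
      rw [hσ (iᶜ ∩ Aᶜ) (hi₁.compl.inter hA.compl) inter_subset_right]; rfl
    rw [SignedMeasure.totalVariation, Measure.add_apply, hpos, hneg,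
      SignedMeasure.toMeasureOfZeroLE_apply _ _ _ hA.compl,
      SignedMeasure.toMeasureOfLEZero_apply _ _ _ hA.compl]
    simp [NNReal.eq_iff, h1, h2]
    exact ⟨h1, h2⟩
  rw [cTV, Measure.add_apply, conc_re hA hσ, him, add_zero]

lemma cInt_indicator_conc {A : Set X} (hA : MeasurableSet A) (hσ : ConcOn σ A) (f : X → ℂ) :
    cInt σ f = cInt σ (A.indicator f) := by
  apply cInt_congr_ae
  have h0 : cTV σ {x | ¬ f x = A.indicator f x} = 0 := by
    refine measure_mono_null (fun x hx => ?_) (conc_cTV hA hσ)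
    simp only [mem_setOf_eq] at hx
    by_contra hxA
    simp only [mem_compl_iff, not_not] at hxA
    exact hx (Set.indicator_of_mem hxA f).symm
  exact (ae_iff).mpr h0

lemma jordan_restrict (s : SignedMeasure X) {B : Set X} (hB : MeasurableSet B) :
    (SignedMeasure.toJordanDecomposition (s.restrict B)).posPart
      = s.toJordanDecomposition.posPart.restrict B ∧
    (SignedMeasure.toJordanDecomposition (s.restrict B)).negPart
      = s.toJordanDecomposition.negPart.restrict B := by
  set J := s.toJordanDecomposition
  set J' : JordanDecomposition X :=
    { posPart := J.posPart.restrict B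
      negPart := J.negPart.restrict B
      mutuallySingular :=
        J.mutuallySingular.mono Measure.restrict_le_self Measure.restrict_le_self }
  have hJ' : J'.toSignedMeasure = s.restrict B := by
    ext E hE
    rw [JordanDecomposition.toSignedMeasure, Measure.toSignedMeasure_sub_apply hE,
      VectorMeasure.restrict_apply s hB hE]
    show ((J.posPart.restrict B) E).toReal - ((J.negPart.restrict B) E).toReal = _
    rw [Measure.restrict_apply hE, Measure.restrict_apply hE, sm_apply s (hE.inter hB)]
  have : SignedMeasure.toJordanDecomposition (s.restrict B) = J' := by
    rw [← hJ', JordanDecomposition.toJordanDecomposition_toSignedMeasure]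
  rw [this]
  exact ⟨rfl, rfl⟩

lemma re_restrict (σ : ComplexMeasure X) {B : Set X} (hB : MeasurableSet B) :
    ComplexMeasure.re (σ.restrict B) = σ.re.restrict B := by
  ext E hE
  rw [VectorMeasure.restrict_apply _ hB hE]
  exact congrArg Complex.re (VectorMeasure.restrict_apply _ hB hE)

lemma im_restrict (σ : ComplexMeasure X) {B : Set X} (hB : MeasurableSet B) :
    ComplexMeasure.im (σ.restrict B) = σ.im.restrict B := by
  ext E hE
  rw [VectorMeasure.restrict_apply _ hB hE]
  exact congrArg Complex.im (VectorMeasure.restrict_apply _ hB hE)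

lemma cInt_restrict (σ : ComplexMeasure X) {B : Set X} (hB : MeasurableSet B) (f : X → ℂ) :
    cInt (σ.restrict B) f = cInt σ (B.indicator f) := by
  unfold cInt
  rw [re_restrict σ hB, im_restrict σ hB,
    (jordan_restrict σ.re hB).1, (jordan_restrict σ.re hB).2,
    (jordan_restrict σ.im hB).1, (jordan_restrict σ.im hB).2,
    integral_indicator hB, integral_indicator hB, integral_indicator hB, integral_indicator hB]

lemma cInt_zero (f : X → ℂ) : cInt (0 : ComplexMeasure X) f = 0 := by
  unfold cInt
  have hre : (0 : ComplexMeasure X).re = 0 := by ext E hE; show ((0 : ComplexMeasure X) E).re = (0 : SignedMeasure X) E; simp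
  have him : (0 : ComplexMeasure X).im = 0 := by ext E hE; show ((0 : ComplexMeasure X) E).im = (0 : SignedMeasure X) E; simp
  rw [hre, him, SignedMeasure.toJordanDecomposition_zero]
  simp [JordanDecomposition.zero_posPart, JordanDecomposition.zero_negPart]

lemma cInt_sub (hf : Integrable f (cTV σ)) (hg : Integrable g (cTV σ)) :
    cInt σ (fun x => f x - g x) = cInt σ f - cInt σ g := by
  unfold cInt
  rw [integral_sub (hf.mono_measure (le_cTV1 σ)) (hg.mono_measure (le_cTV1 σ)),
    integral_sub (hf.mono_measure (le_cTV2 σ)) (hg.mono_measure (le_cTV2 σ)),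
    integral_sub (hf.mono_measure (le_cTV3 σ)) (hg.mono_measure (le_cTV3 σ)),
    integral_sub (hf.mono_measure (le_cTV4 σ)) (hg.mono_measure (le_cTV4 σ))]
  ring

lemma integrable_of_bound (hf : AEStronglyMeasurable f (cTV σ)) (C : ℝ)
    (hb : ∀ x, ‖f x‖ ≤ C) : Integrable f (cTV σ) := by
  have hfin : IsFiniteMeasure (cTV σ) := by
    constructor
    rw [cTV, Measure.add_apply, SignedMeasure.totalVariation, SignedMeasure.totalVariation,
      Measure.add_apply, Measure.add_apply]
    have h1 := measure_lt_top σ.re.toJordanDecomposition.posPart univ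
    have h2 := measure_lt_top σ.re.toJordanDecomposition.negPart univ
    have h3 := measure_lt_top σ.im.toJordanDecomposition.posPart univ
    have h4 := measure_lt_top σ.im.toJordanDecomposition.negPart univ
    exact ENNReal.add_lt_top.2 ⟨ENNReal.add_lt_top.2 ⟨h1, h2⟩, ENNReal.add_lt_top.2 ⟨h3, h4⟩⟩
  exact (integrable_const C).mono' hf (Filter.Eventually.of_forall hb)

lemma cInt_finset_sum {J : Type} (s : Finset J) (g : J → X → ℂ)
    (hg : ∀ j ∈ s, Integrable (g j) (cTV σ)) :
    cInt σ (fun x => ∑ j ∈ s, g j x) = ∑ j ∈ s, cInt σ (g j) := by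
  classical
  induction s using Finset.induction_on with
  | empty => simp [show (fun _ : X => (0:ℂ)) = fun _ => (0:ℂ) from rfl]; unfold cInt; simp
  | @insert a s ha ih =>
    rw [Finset.sum_insert ha]
    have h1 : Integrable (g a) (cTV σ) := hg a (Finset.mem_insert_self a s)
    have h2 : ∀ j ∈ s, Integrable (g j) (cTV σ) :=
      fun j hj => hg j (Finset.mem_insert_of_mem hj)
    have h3 : Integrable (fun x => ∑ j ∈ s, g j x) (cTV σ) := by
      have := integrable_finset_sum s h2
      simpa using this
    have : (fun x => ∑ j ∈ insert a s, g j x)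
        = fun x => g a x + ∑ j ∈ s, g j x := by
      funext x; rw [Finset.sum_insert ha]
    rw [this, cInt_add h1 h3, ih h2]

lemma cInt_param_sm {μ : ComplexMeasure X} {K : ℝ → X → ℂ}
    (hK : StronglyMeasurable (Function.uncurry K)) :
    StronglyMeasurable (fun t => cInt μ (K t)) := by
  unfold cInt
  have h1 := hK.integral_prod_right' (ν := μ.re.toJordanDecomposition.posPart)
  have h2 := hK.integral_prod_right' (ν := μ.re.toJordanDecomposition.negPart)
  have h3 := hK.integral_prod_right' (ν := μ.im.toJordanDecomposition.posPart)
  have h4 := hK.integral_prod_right' (ν := μ.im.toJordanDecomposition.negPart)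
  exact ((h1.sub h2).add (stronglyMeasurable_const.mul (h3.sub h4)))

lemma ae_of_on {A : Set X} (hnull : cTV σ Aᶜ = 0) {p : X → Prop}
    (hp : ∀ x ∈ A, p x) : ∀ᵐ x ∂(cTV σ), p x := by
  rw [ae_iff]
  refine measure_mono_null (fun x hx => ?_) hnull
  simp only [mem_setOf_eq] at hx
  by_contra hxA
  simp only [mem_compl_iff, not_not] at hxA
  exact hx (hp x hxA)

lemma integrable_of_bound_on {A : Set X} (hA : MeasurableSet A) (hnull : cTV σ Aᶜ = 0)
    (hf : AEStronglyMeasurable f (cTV σ)) (C : ℝ) (hC : 0 ≤ C)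
    (hb : ∀ x ∈ A, ‖f x‖ ≤ C) : Integrable f (cTV σ) := by
  have h1 : Integrable (A.indicator f) (cTV σ) := by
    refine integrable_of_bound (hf.indicator hA) C (fun x => ?_)
    by_cases hx : x ∈ A
    · rw [Set.indicator_of_mem hx]; exact hb x hx
    · rw [Set.indicator_of_notMem hx]; simpa using hC
  refine h1.congr (ae_of_on hnull (fun x hx => (Set.indicator_of_mem hx f)))

lemma eq_of_forall_norm_sub_le {x y : ℂ} {C : ℝ}
    (hb : ∀ ε : ℝ, 0 < ε → ‖x - y‖ ≤ ε * C) : x = y := by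
  have h0 : ‖x - y‖ ≤ 0 := by
    rcases le_or_gt C 0 with hC | hC
    · exact (hb 1 one_pos).trans (by nlinarith)
    · by_contra hc
      push_neg at hc
      have := hb (‖x - y‖ / (2 * C)) (by positivity)
      have h2 : C * ‖x - y‖ / (2 * C) = ‖x - y‖ / 2 := by
        field_simp
      rw [div_mul_eq_mul_div, mul_comm, h2] at this
      linarith
  have := norm_nonneg (x - y)
  have hxy : ‖x - y‖ = 0 := le_antisymm h0 this
  have := norm_eq_zero.mp hxy
  linear_combination this

section H

variable {h : ℝ → ℂ} (hcont : ContinuousOn h (Icc 0 1)) (h1 : h 1 = 0)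

/-- the measurable extension of h by zero outside Icc 0 1 -/
def hp (h : ℝ → ℂ) : ℝ → ℂ := (Icc (0:ℝ) 1).indicator h

include hcont in
lemma hp_meas : Measurable (hp h) := by
  have hrc : Continuous ((Icc (0:ℝ) 1).restrict h) := hcont.restrict
  have hec : Continuous (Set.IccExtend (zero_le_one (α := ℝ)) ((Icc (0:ℝ) 1).restrict h)) :=
    hrc.Icc_extend'
  have : hp h = (Icc (0:ℝ) 1).indicator
      (Set.IccExtend (zero_le_one (α := ℝ)) ((Icc (0:ℝ) 1).restrict h)) := by
    funext x
    by_cases hx : x ∈ Icc (0:ℝ) 1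
    · rw [hp, Set.indicator_of_mem hx, Set.indicator_of_mem hx, Set.IccExtend_of_mem _ _ hx]
      rfl
    · rw [hp, Set.indicator_of_notMem hx, Set.indicator_of_notMem hx]
  rw [this]
  exact hec.measurable.indicator measurableSet_Icc

include hcont h1 in
lemma hp_contAt : ∀ x : ℝ, x ≠ 0 → ContinuousAt (hp h) x := by
  intro x hx
  rcases lt_trichotomy x 1 with hx1 | hx1 | hx1
  · rcases lt_or_gt_of_ne hx with hx0 | hx0
    · have hev : hp h =ᶠ[𝓝 x] (fun _ => 0) := by
        refine Filter.eventually_of_mem (Iio_mem_nhds hx0) (fun y hy => ?_)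
        exact Set.indicator_of_notMem (fun hc => absurd hc.1 (not_le.2 hy)) _
      exact ContinuousAt.congr continuousAt_const hev.symm
    · have hmem : Icc (0:ℝ) 1 ∈ 𝓝 x := Icc_mem_nhds hx0 hx1
      have hca : ContinuousAt h x := hcont.continuousAt hmem
      refine hca.congr ?_
      refine Filter.eventually_of_mem hmem (fun y hy => ?_)
      exact (Set.indicator_of_mem hy h).symm
  · subst hx1
    have hsup : 𝓝[Icc (0:ℝ) 1] 1 ⊔ 𝓝[(Icc (0:ℝ) 1)ᶜ] 1 = 𝓝 1 := by
      rw [← nhdsWithin_union, union_compl_self, nhdsWithin_univ]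
    have t1 : Tendsto (hp h) (𝓝[Icc (0:ℝ) 1] 1) (𝓝 0) := by
      have hw : Tendsto h (𝓝[Icc (0:ℝ) 1] 1) (𝓝 (h 1)) :=
        hcont 1 (right_mem_Icc.2 zero_le_one)
      rw [h1] at hw
      refine hw.congr' ?_
      filter_upwards [self_mem_nhdsWithin] with y hy
      exact (Set.indicator_of_mem hy h).symm
    have t2 : Tendsto (hp h) (𝓝[(Icc (0:ℝ) 1)ᶜ] 1) (𝓝 0) := by
      refine Tendsto.congr' ?_ tendsto_const_nhds
      filter_upwards [self_mem_nhdsWithin] with y hy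
      exact (Set.indicator_of_notMem hy h).symm
    have hval : hp h 1 = 0 := by
      rw [hp, Set.indicator_of_mem (right_mem_Icc.2 zero_le_one), h1]
    rw [ContinuousAt, hval, ← hsup, tendsto_sup]
    exact ⟨t1, t2⟩
  · have hev : hp h =ᶠ[𝓝 x] (fun _ => 0) := by
      refine Filter.eventually_of_mem (Ioi_mem_nhds hx1) (fun y hy => ?_)
      exact Set.indicator_of_notMem (fun hc => absurd hc.2 (not_le.2 hy)) _
    exact ContinuousAt.congr continuousAt_const hev.symm

/-- the kernel function -/
def FF (h : ℝ → ℂ) : ℝ → ℝ → ℂ := fun t s => (Ici (0:ℝ)).indicator (fun s' => hp h (t + s')) s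

include h1 in
lemma FF_eq {t : ℝ} (ht : t ∈ Icc (0:ℝ) 1) :
    (Ico 0 (1 - t)).indicator (fun s => h (t + s)) = FF h t := by
  funext s
  rcases le_or_gt 0 s with hs0 | hs0
  · rw [FF, Set.indicator_of_mem (mem_Ici.mpr hs0)]
    rcases lt_or_ge s (1 - t) with hs1 | hs1
    · rw [Set.indicator_of_mem (show s ∈ Ico 0 (1-t) from ⟨hs0, hs1⟩), hp,
        Set.indicator_of_mem (show t + s ∈ Icc (0:ℝ) 1 from ⟨by linarith [ht.1], by linarith⟩)]
    · rw [Set.indicator_of_notMem (fun hc => absurd hc.2 (not_lt.2 hs1))]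
      rcases eq_or_lt_of_le hs1 with he | hl
      · rw [hp, show t + s = 1 by linarith [he], Set.indicator_of_mem (right_mem_Icc.2 zero_le_one), h1]
      · rw [hp, Set.indicator_of_notMem (fun hc => absurd hc.2 (by push_neg; linarith))]
  · rw [FF, Set.indicator_of_notMem (fun hc => absurd (mem_Ici.mp hc) (not_le.2 hs0)),
      Set.indicator_of_notMem (fun hc => absurd hc.1 (not_le.2 hs0))]

include hcont in
lemma FF_meas : StronglyMeasurable (Function.uncurry (FF h)) := by
  have h1m : Measurable (fun p : ℝ × ℝ => hp h (p.1 + p.2)) :=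
    (hp_meas hcont).comp measurable_add
  have hset : MeasurableSet {p : ℝ × ℝ | p.2 ∈ Ici (0:ℝ)} :=
    measurable_snd measurableSet_Ici
  have : Function.uncurry (FF h) = {p : ℝ × ℝ | p.2 ∈ Ici (0:ℝ)}.indicator
      (fun p => hp h (p.1 + p.2)) := by
    funext p
    rcases p with ⟨t, s⟩
    by_cases hs : s ∈ Ici (0:ℝ)
    · rw [Function.uncurry, FF]
      simp only [Set.indicator_of_mem hs, Set.indicator_of_mem (show (t,s) ∈ {p : ℝ × ℝ | p.2 ∈ Ici (0:ℝ)} from hs)]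
    · rw [Function.uncurry, FF]
      simp only [Set.indicator_of_notMem hs, Set.indicator_of_notMem (show (t,s) ∉ {p : ℝ × ℝ | p.2 ∈ Ici (0:ℝ)} from hs)]
  rw [this]
  exact (h1m.indicator hset).stronglyMeasurable

include hcont h1 in
lemma FF_tendsto {t₀ : ℝ} (ht₀ : t₀ ∈ Icc (0:ℝ) 1) (s : ℝ) :
    Tendsto (fun t => FF h t s) (𝓝[Icc (0:ℝ) 1] t₀) (𝓝 (FF h t₀ s)) := by
  rcases le_or_gt 0 s with hs0 | hs0
  · have hfe : ∀ t, FF h t s = hp h (t + s) := fun t => Set.indicator_of_mem hs0 _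
    simp only [hfe]
    rcases eq_or_ne (t₀ + s) 0 with hz | hz
    · have hs00 : s = 0 := by
        have := ht₀.1; linarith [le_antisymm (by linarith) (le_trans ht₀.1 (by linarith) : (0:ℝ) ≤ t₀)]
      have ht00 : t₀ = 0 := by linarith [hs00 ▸ hz]
      subst hs00; subst ht00
      simp only [add_zero]
      have hw : Tendsto h (𝓝[Icc (0:ℝ) 1] 0) (𝓝 (h 0)) :=
        hcont 0 (left_mem_Icc.2 zero_le_one)
      have hval : hp h 0 = h 0 := Set.indicator_of_mem (left_mem_Icc.2 zero_le_one) h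
      rw [hval]
      refine hw.congr' ?_
      filter_upwards [self_mem_nhdsWithin] with y hy
      exact (Set.indicator_of_mem hy h).symm
    · have hca : ContinuousAt (hp h) (t₀ + s) := hp_contAt hcont h1 _ hz
      have : Tendsto (fun t => t + s) (𝓝[Icc (0:ℝ) 1] t₀) (𝓝 (t₀ + s)) :=
        ((continuous_add_right s).tendsto t₀).mono_left nhdsWithin_le_nhds
      exact hca.tendsto.comp this
  · have hfe : ∀ t, FF h t s = 0 := fun t =>
      Set.indicator_of_notMem (fun hc => absurd hc (not_le.2 hs0)) _
    simp only [hfe]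
    exact tendsto_const_nhds

omit hcont h1 in
lemma FF_bound {M : ℝ} (hM : ∀ x ∈ Icc (0:ℝ) 1, ‖h x‖ ≤ M) (hM0 : 0 ≤ M) :
    ∀ t s, ‖FF h t s‖ ≤ M := by
  intro t s
  rw [FF]
  by_cases hs : s ∈ Ici (0:ℝ)
  · rw [Set.indicator_of_mem hs]
    rw [hp]
    by_cases hts : t + s ∈ Icc (0:ℝ) 1
    · rw [Set.indicator_of_mem hts]; exact hM _ hts
    · rw [Set.indicator_of_notMem hts]; simpa using hM0
  · rw [Set.indicator_of_notMem hs]; simpa using hM0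

end H

lemma adjoint_key (μ : ComplexMeasure ℝ) (hμc : ConcOn μ (Ico 0 1))
    (ν ρ : ComplexMeasure ℝ) (hν : ConcOn ν (Ico 0 1)) (hxc : IsXConv μ ν ρ)
    (h : ℝ → ℂ) (hcont : ContinuousOn h (Icc 0 1)) (h1 : h 1 = 0) :
    cInt ρ h = cInt ν fun t => (t : ℂ) *
      cInt (μ.restrict (Ico 0 (1 - t))) fun s => h (t + s) := by
  classical
  obtain ⟨hρc, hρE⟩ := hxc
  have hAm : MeasurableSet (Ico (0:ℝ) 1) := measurableSet_Ico
  have hμnull : cTV μ (Ico (0:ℝ) 1)ᶜ = 0 := conc_cTV hAm hμc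
  have hνnull : cTV ν (Ico (0:ℝ) 1)ᶜ = 0 := conc_cTV hAm hν
  have hρnull : cTV ρ (Ico (0:ℝ) 1)ᶜ = 0 := conc_cTV hAm hρc
  obtain ⟨M0, hM0⟩ := isCompact_Icc.exists_bound_of_continuousOn hcont
  set M : ℝ := max M0 0 with hMdef
  have hM : ∀ x ∈ Icc (0:ℝ) 1, ‖h x‖ ≤ M := fun x hx => (hM0 x hx).trans (le_max_left _ _)
  have hMnn : (0:ℝ) ≤ M := le_max_right _ _
  set K : ℝ := (cTV μ univ).toReal with hKdef
  have hK0 : 0 ≤ K := ENNReal.toReal_nonneg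
  set Tρ : ℝ := (cTV ρ univ).toReal with hTρdef
  set Tν : ℝ := (cTV ν univ).toReal with hTνdef
  have hTρ0 : 0 ≤ Tρ := ENNReal.toReal_nonneg
  have hTν0 : 0 ≤ Tν := ENNReal.toReal_nonneg
  -- h cut down to [0,1)
  set h'' : ℝ → ℂ := (Ico (0:ℝ) 1).indicator (hp h) with hh''def
  have hh''m : Measurable h'' := (hp_meas hcont).indicator hAm
  have hh''b : ∀ x, ‖h'' x‖ ≤ M := by
    intro x; by_cases hx : x ∈ Ico (0:ℝ) 1
    · rw [hh''def, Set.indicator_of_mem hx, hp,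
        Set.indicator_of_mem (Ico_subset_Icc_self hx)]
      exact hM _ (Ico_subset_Icc_self hx)
    · rw [hh''def, Set.indicator_of_notMem hx]; simpa using hMnn
  have hheq : ∀ x ∈ Ico (0:ℝ) 1, h x = h'' x := fun x hx => by
    rw [hh''def, Set.indicator_of_mem hx, hp,
      Set.indicator_of_mem (Ico_subset_Icc_self hx)]
  -- values of hp off [0,1)
  have hp_off : ∀ x : ℝ, (1:ℝ) ≤ x → hp h x = 0 := by
    intro x hx
    rcases eq_or_lt_of_le hx with he | hl
    · rw [hp, ← he, Set.indicator_of_mem (right_mem_Icc.2 zero_le_one), h1]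
    · rw [hp, Set.indicator_of_notMem (fun hc => absurd hc.2 (not_le.2 hl))]
  -- F facts
  have hFm := FF_meas hcont
  have hFb := FF_bound (h := h) hM hMnn
  have hFts : ∀ t ∈ Ico (0:ℝ) 1, ∀ s ∈ Ico (0:ℝ) 1, FF h t s = h'' (t + s) := by
    intro t ht s hs
    rw [FF, Set.indicator_of_mem (mem_Ici.2 hs.1)]
    rcases lt_or_ge (t + s) 1 with hts | hts
    · rw [hh''def,
        Set.indicator_of_mem (show t+s ∈ Ico (0:ℝ) 1 from ⟨by linarith [ht.1, hs.1], hts⟩)]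
    · rw [hh''def, Set.indicator_of_notMem (fun hc => absurd hc.2 (not_lt.2 hts)),
        hp_off _ hts]
  -- Gh
  set Gh : ℝ → ℂ := (Ico (0:ℝ) 1).indicator (fun t => (t:ℂ) * cInt μ (FF h t)) with hGhdef
  have hGh_m : StronglyMeasurable Gh :=
    ((Complex.measurable_ofReal.stronglyMeasurable.mul (cInt_param_sm hFm)).indicator hAm)
  have hcIntFb : ∀ t, ‖cInt μ (FF h t)‖ ≤ M * K := fun t =>
    norm_cInt_le (Filter.Eventually.of_forall (fun s => hFb t s))
  have hnt : ∀ t : ℝ, t ∈ Ico (0:ℝ) 1 → ‖(t:ℂ)‖ ≤ 1 := by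
    intro t ht
    rw [Complex.norm_real, Real.norm_eq_abs, abs_of_nonneg ht.1]
    exact ht.2.le
  have hGh_b : ∀ t, ‖Gh t‖ ≤ M * K := by
    intro t
    by_cases ht : t ∈ Ico (0:ℝ) 1
    · rw [hGhdef, Set.indicator_of_mem ht, norm_mul]
      calc ‖(t:ℂ)‖ * ‖cInt μ (FF h t)‖ ≤ 1 * (M * K) :=
            mul_le_mul (hnt t ht) (hcIntFb t) (norm_nonneg _) zero_le_one
        _ = M * K := one_mul _
    · rw [hGhdef, Set.indicator_of_notMem ht]
      simpa using mul_nonneg hMnn hK0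
  have hint_Gh : Integrable Gh (cTV ν) :=
    integrable_of_bound hGh_m.aestronglyMeasurable (M*K) hGh_b
  -- step 1
  have hstep1 : (cInt ν fun t => (t : ℂ) *
      cInt (μ.restrict (Ico 0 (1 - t))) fun s => h (t + s)) = cInt ν Gh := by
    rw [cInt_indicator_conc hAm hν]
    congr 1
    funext t
    by_cases ht : t ∈ Ico (0:ℝ) 1
    · rw [Set.indicator_of_mem ht, hGhdef, Set.indicator_of_mem ht,
        cInt_restrict μ measurableSet_Ico, FF_eq h1 (Ico_subset_Icc_self ht)]
    · rw [Set.indicator_of_notMem ht, hGhdef, Set.indicator_of_notMem ht]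
  -- step 2
  have hstep2 : cInt ρ h = cInt ρ h'' := by
    rw [cInt_indicator_conc hAm hρc (f := h)]
    congr 1
    funext x
    by_cases hx : x ∈ Ico (0:ℝ) 1
    · rw [Set.indicator_of_mem hx, hheq x hx]
    · rw [Set.indicator_of_notMem hx, hh''def, Set.indicator_of_notMem hx]
  -- main estimate
  have hmain : ∀ ε : ℝ, 0 < ε → ‖cInt ρ h'' - cInt ν Gh‖ ≤ ε * (Tρ + K * Tν) := by
    intro ε hε
    obtain ⟨δ, hδ0, hδ⟩ := (Metric.uniformContinuousOn_iff.1
      (isCompact_Icc.uniformContinuousOn_of_continuous hcont)) ε hε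
    obtain ⟨n, hn⟩ := exists_nat_one_div_lt hδ0
    set N : ℝ := (n:ℝ) + 1 with hNdef
    have hN0 : (0:ℝ) < N := by positivity
    set c : ℕ → ℂ := fun j => h ((j:ℝ)/N) with hcdef
    set E : ℕ → Set ℝ := fun j => Ico ((j:ℝ)/N) (((j:ℝ)+1)/N) with hEdef
    have hEm : ∀ j, MeasurableSet (E j) := fun j => measurableSet_Ico
    have hEsub : ∀ j ∈ Finset.range (n+1), E j ⊆ Ico (0:ℝ) 1 := by
      intro j hj x hx
      have hjn : (j:ℝ) ≤ n := by exact_mod_cast Nat.lt_succ_iff.1 (Finset.mem_range.1 hj)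
      constructor
      · exact le_trans (by positivity) hx.1
      · refine lt_of_lt_of_le hx.2 ?_
        rw [div_le_one hN0]
        linarith
    have hcI : ∀ j ∈ Finset.range (n+1), (j:ℝ)/N ∈ Icc (0:ℝ) 1 := by
      intro j hj
      have hjn : (j:ℝ) ≤ n := by exact_mod_cast Nat.lt_succ_iff.1 (Finset.mem_range.1 hj)
      constructor
      · positivity
      · rw [div_le_one hN0]; linarith
    have hcb : ∀ j ∈ Finset.range (n+1), ‖c j‖ ≤ M := fun j hj => hM _ (hcI j hj)
    set φ : ℝ → ℂ := fun x => ∑ j ∈ Finset.range (n+1),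
      (E j).indicator (fun _ => c j) x with hφdef
    have hφm : Measurable φ :=
      Finset.measurable_sum _ (fun j _ => measurable_const.indicator (hEm j))
    have hφ0 : ∀ x, x ∉ Ico (0:ℝ) 1 → φ x = 0 := by
      intro x hx
      refine Finset.sum_eq_zero (fun j hj => ?_)
      exact Set.indicator_of_notMem (fun hc => hx (hEsub j hj hc)) _
    have hφap : ∀ x ∈ Ico (0:ℝ) 1, ‖φ x - h'' x‖ ≤ ε := by
      intro x hx
      have hxN0 : 0 ≤ x * N := mul_nonneg hx.1 hN0.le
      set j : ℕ := ⌊x * N⌋₊ with hjdef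
      have hjn : j < n + 1 := by
        rw [hjdef]
        rw [Nat.floor_lt hxN0]
        push_cast
        nlinarith [hx.2]
      have hjle : (j:ℝ) ≤ x * N := Nat.floor_le hxN0
      have hjlt : x * N < (j:ℝ) + 1 := Nat.lt_floor_add_one _
      have hjmem : x ∈ E j := by
        constructor
        · rw [div_le_iff₀ hN0]; linarith
        · rw [lt_div_iff₀ hN0]; linarith
      have huniq : ∀ k ∈ Finset.range (n+1), k ≠ j →
          (E k).indicator (fun _ => c k) x = 0 := by
        intro k hk hkj
        refine Set.indicator_of_notMem (fun hc => hkj ?_) _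
        have h1' : (k:ℝ) ≤ x * N := (div_le_iff₀ hN0).1 hc.1
        have h2' : x * N < (k:ℝ)+1 := (lt_div_iff₀ hN0).1 hc.2
        rw [hjdef]
        symm
        rw [Nat.floor_eq_iff hxN0]
        exact ⟨by exact_mod_cast h1', by exact_mod_cast h2'⟩
      have hφx : φ x = c j := by
        have hx0 : φ x = ∑ k ∈ Finset.range (n+1), (E k).indicator (fun _ => c k) x := rfl
        rw [hx0, Finset.sum_eq_single_of_mem j (Finset.mem_range.2 hjn) huniq,
          Set.indicator_of_mem hjmem]
      rw [hφx, ← hheq x hx, hcdef]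
      have hdist : dist ((j:ℝ)/N) x < δ := by
        rw [Real.dist_eq, abs_sub_lt_iff]
        have hd1 : (j:ℝ)/N ≤ x := hjmem.1
        have hd2 : x < ((j:ℝ)+1)/N := hjmem.2
        have hd3 : ((j:ℝ)+1)/N - (j:ℝ)/N = 1/N := by ring
        constructor
        · have : (j:ℝ)/N - x ≤ 0 := sub_nonpos.2 hd1
          linarith
        · have : x - (j:ℝ)/N < 1/N := by linarith
          exact lt_of_lt_of_le this (le_of_lt hn)
      have := hδ ((j:ℝ)/N) (hcI j (Finset.mem_range.2 hjn)) x (Ico_subset_Icc_self hx) hdist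
      rw [dist_eq_norm] at this
      exact this.le
    have hφb : ∀ x, ‖φ x‖ ≤ M + ε := by
      intro x
      by_cases hx : x ∈ Ico (0:ℝ) 1
      · calc ‖φ x‖ = ‖(φ x - h'' x) + h'' x‖ := by ring_nf
          _ ≤ ‖φ x - h'' x‖ + ‖h'' x‖ := norm_add_le _ _
          _ ≤ ε + M := add_le_add (hφap x hx) (hh''b x)
          _ = M + ε := by ring
      · rw [hφ0 x hx]
        simpa using by linarith
    -- rewrite φ with scalar-times-indicator-one
    have hφrw : ∀ x, φ x = ∑ j ∈ Finset.range (n+1),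
        c j * (E j).indicator (1 : ℝ → ℂ) x := by
      intro x
      refine Finset.sum_congr rfl (fun j _ => ?_)
      by_cases hxj : x ∈ E j
      · rw [Set.indicator_of_mem hxj, Set.indicator_of_mem hxj]
        simp
      · rw [Set.indicator_of_notMem hxj, Set.indicator_of_notMem hxj]
        simp
    have hind_b : ∀ (j : ℕ) (x : ℝ), ‖(E j).indicator (1 : ℝ → ℂ) x‖ ≤ 1 := by
      intro j x
      by_cases hx : x ∈ E j
      · rw [Set.indicator_of_mem hx]; simp
      · rw [Set.indicator_of_notMem hx]; simp
    have hind_int : ∀ (σ : ComplexMeasure ℝ) (j : ℕ), j ∈ Finset.range (n+1) →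
        Integrable (fun x => c j * (E j).indicator (1:ℝ→ℂ) x) (cTV σ) := by
      intro σ j hj
      refine integrable_of_bound
        ((measurable_const.indicator (hEm j)).stronglyMeasurable.const_mul _).aestronglyMeasurable
        (M * 1) (fun x => ?_)
      rw [norm_mul]
      exact mul_le_mul (hcb j hj) (hind_b j x) (norm_nonneg _) hMnn
    have hiii1 : cInt ρ φ = ∑ j ∈ Finset.range (n+1), c j * ρ (E j) := by
      have : cInt ρ φ = cInt ρ (fun x => ∑ j ∈ Finset.range (n+1),
          c j * (E j).indicator (1 : ℝ → ℂ) x) := by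
        congr 1; funext x; exact hφrw x
      rw [this, cInt_finset_sum _ _ (hind_int ρ)]
      refine Finset.sum_congr rfl (fun j _ => ?_)
      rw [cInt_smul, cInt_indicator (hEm j)]
    -- inner integral measurability and bound
    have hsm_in : ∀ j : ℕ, StronglyMeasurable
        (fun t => cInt μ (fun s => (E j).indicator (1:ℝ→ℂ) (t+s))) := by
      intro j
      refine cInt_param_sm ?_
      exact (((measurable_const (a := (1:ℂ))).indicator (hEm j)).comp
        measurable_add).stronglyMeasurable
    have hbnd_in : ∀ (j : ℕ) (t : ℝ), ‖cInt μ (fun s => (E j).indicator (1:ℝ→ℂ) (t+s))‖ ≤ K := by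
      intro j t
      have := norm_cInt_le (σ := μ) (f := fun s => (E j).indicator (1:ℝ→ℂ) (t+s))
        (Filter.Eventually.of_forall (fun s => hind_b j (t+s)))
      simpa using this
    have hint_term : ∀ j ∈ Finset.range (n+1), Integrable
        (fun t : ℝ => c j * ((t:ℂ) * cInt μ (fun s => (E j).indicator (1:ℝ→ℂ) (t+s)))) (cTV ν) := by
      intro j hj
      refine integrable_of_bound_on hAm hνnull
        ((Complex.measurable_ofReal.stronglyMeasurable.mul (hsm_in j)).const_mul
          (c j)).aestronglyMeasurable (M * K) (mul_nonneg hMnn hK0) (fun t ht => ?_)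
      rw [norm_mul, norm_mul]
      calc ‖c j‖ * (‖(t:ℂ)‖ * ‖cInt μ (fun s => (E j).indicator (1:ℝ→ℂ) (t+s))‖)
          ≤ M * (1 * K) := by
            refine mul_le_mul (hcb j hj) ?_ (by positivity) hMnn
            exact mul_le_mul (hnt t ht) (hbnd_in j t) (norm_nonneg _) zero_le_one
        _ = M * K := by ring
    -- step (iii): cInt ρ φ = cInt ν Gφ
    set Gφ : ℝ → ℂ := (Ico (0:ℝ) 1).indicator
      (fun t => (t:ℂ) * cInt μ (fun s => φ (t+s))) with hGφdef
    have hφshift_int : ∀ t : ℝ, ∀ j ∈ Finset.range (n+1), Integrable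
        (fun s => c j * (E j).indicator (1:ℝ→ℂ) (t+s)) (cTV μ) := by
      intro t j hj
      refine integrable_of_bound
        (((((measurable_const (a := (1:ℂ))).indicator (hEm j)).comp
          (measurable_const_add t)).stronglyMeasurable).const_mul _).aestronglyMeasurable
        (M * 1) (fun s => ?_)
      rw [norm_mul]
      exact mul_le_mul (hcb j hj) (hind_b j (t+s)) (norm_nonneg _) hMnn
    have hGφ_eq : cInt ν (fun t : ℝ => ∑ j ∈ Finset.range (n+1),
        c j * ((t:ℂ) * cInt μ (fun s => (E j).indicator (1:ℝ→ℂ) (t+s)))) = cInt ν Gφ := by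
      refine cInt_congr_ae (ae_of_on hνnull (fun t ht => ?_))
      rw [hGφdef, Set.indicator_of_mem ht]
      have hin : cInt μ (fun s => φ (t+s)) = ∑ j ∈ Finset.range (n+1),
          c j * cInt μ (fun s => (E j).indicator (1:ℝ→ℂ) (t+s)) := by
        have hrw : (fun s => φ (t+s)) = fun s => ∑ j ∈ Finset.range (n+1),
            c j * (E j).indicator (1:ℝ→ℂ) (t+s) := by
          funext s; exact hφrw (t+s)
        rw [hrw, cInt_finset_sum _ _ (hφshift_int t)]
        exact Finset.sum_congr rfl (fun j _ => cInt_smul μ (c j) _)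
      rw [hin, Finset.mul_sum]
      refine Finset.sum_congr rfl (fun j _ => by ring)
    have hiii : cInt ρ φ = cInt ν Gφ := by
      rw [hiii1, ← hGφ_eq, cInt_finset_sum _ _ hint_term]
      refine Finset.sum_congr rfl (fun j hj => ?_)
      rw [hρE (E j) (hEm j) (hEsub j hj), ← cInt_smul]
    -- term 1
    have hint_h'' : Integrable h'' (cTV ρ) :=
      integrable_of_bound hh''m.stronglyMeasurable.aestronglyMeasurable M hh''b
    have hint_phiρ : Integrable φ (cTV ρ) :=
      integrable_of_bound hφm.stronglyMeasurable.aestronglyMeasurable (M+ε) hφb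
    have hterm1 : ‖cInt ρ h'' - cInt ρ φ‖ ≤ ε * Tρ := by
      rw [← cInt_sub hint_h'' hint_phiρ]
      refine norm_cInt_le (ae_of_on hρnull (fun x hx => ?_))
      rw [norm_sub_rev]
      exact hφap x hx
    -- term 3
    have hφsm2 : StronglyMeasurable (fun t => cInt μ (fun s => φ (t+s))) :=
      cInt_param_sm ((hφm.comp measurable_add).stronglyMeasurable)
    have hGφm : StronglyMeasurable Gφ :=
      ((Complex.measurable_ofReal.stronglyMeasurable.mul hφsm2).indicator hAm)
    have hGφb : ∀ t, ‖Gφ t‖ ≤ (M+ε) * K := by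
      intro t
      by_cases ht : t ∈ Ico (0:ℝ) 1
      · rw [hGφdef, Set.indicator_of_mem ht, norm_mul]
        have hb2 : ‖cInt μ (fun s => φ (t+s))‖ ≤ (M+ε) * K :=
          norm_cInt_le (Filter.Eventually.of_forall (fun s => hφb (t+s)))
        calc ‖(t:ℂ)‖ * ‖cInt μ (fun s => φ (t+s))‖ ≤ 1 * ((M+ε) * K) :=
              mul_le_mul (hnt t ht) hb2 (norm_nonneg _) zero_le_one
          _ = (M+ε) * K := one_mul _
      · rw [hGφdef, Set.indicator_of_notMem ht]
        simpa using mul_nonneg (by linarith) hK0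
    have hint_Gφ : Integrable Gφ (cTV ν) :=
      integrable_of_bound hGφm.aestronglyMeasurable ((M+ε)*K) hGφb
    have hterm3 : ‖cInt ν Gφ - cInt ν Gh‖ ≤ ε * K * Tν := by
      rw [← cInt_sub hint_Gφ hint_Gh]
      refine norm_cInt_le (ae_of_on hνnull (fun t ht => ?_))
      rw [hGφdef, hGhdef, Set.indicator_of_mem ht, Set.indicator_of_mem ht, ← mul_sub,
        norm_mul]
      have hint_a : Integrable (fun s => φ (t+s)) (cTV μ) :=
        integrable_of_bound ((hφm.comp (measurable_const_add t)).stronglyMeasurable).aestronglyMeasurable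
          (M+ε) (fun s => hφb (t+s))
      have hint_b : Integrable (FF h t) (cTV μ) := by
        refine integrable_of_bound ?_ M (fun s => hFb t s)
        exact (((hp_meas hcont).comp (measurable_const_add t)).indicator
          measurableSet_Ici).stronglyMeasurable.aestronglyMeasurable
      have hinner : ‖cInt μ (fun s => φ (t+s)) - cInt μ (FF h t)‖ ≤ ε * K := by
        rw [← cInt_sub hint_a hint_b]
        refine norm_cInt_le (ae_of_on hμnull (fun s hs => ?_))
        rw [hFts t ht s hs]
        by_cases hts : t + s ∈ Ico (0:ℝ) 1
        · exact hφap (t+s) hts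
        · rw [hφ0 (t+s) hts, hh''def, Set.indicator_of_notMem hts]
          simpa using hε.le
      calc ‖(t:ℂ)‖ * ‖cInt μ (fun s => φ (t+s)) - cInt μ (FF h t)‖ ≤ 1 * (ε * K) :=
            mul_le_mul (hnt t ht) hinner (norm_nonneg _) zero_le_one
        _ = ε * K := one_mul _
    -- combine
    have hdecomp : cInt ρ h'' - cInt ν Gh =
        (cInt ρ h'' - cInt ρ φ) + (cInt ν Gφ - cInt ν Gh) := by
      rw [hiii]; ring
    calc ‖cInt ρ h'' - cInt ν Gh‖
        ≤ ‖cInt ρ h'' - cInt ρ φ‖ + ‖cInt ν Gφ - cInt ν Gh‖ := by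
          rw [hdecomp]; exact norm_add_le _ _
      _ ≤ ε * Tρ + ε * K * Tν := add_le_add hterm1 hterm3
      _ = ε * (Tρ + K * Tν) := by ring
  -- conclude
  rw [hstep2, hstep1]
  exact eq_of_forall_norm_sub_le hmain

lemma transpose_cont (μ : ComplexMeasure ℝ) {h : ℝ → ℂ}
    (hcont : ContinuousOn h (Icc 0 1)) (h1 : h 1 = 0) :
    ContinuousOn (fun t : ℝ => (t:ℂ) *
      cInt (μ.restrict (Ico 0 (1-t))) (fun s => h (t+s))) (Icc 0 1) := by
  obtain ⟨M0, hM0⟩ := isCompact_Icc.exists_bound_of_continuousOn hcont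
  set M : ℝ := max M0 0 with hMdef
  have hM : ∀ x ∈ Icc (0:ℝ) 1, ‖h x‖ ≤ M := fun x hx => (hM0 x hx).trans (le_max_left _ _)
  have hMnn : (0:ℝ) ≤ M := le_max_right _ _
  have hagree : ∀ t ∈ Icc (0:ℝ) 1,
      (t:ℂ) * cInt (μ.restrict (Ico 0 (1-t))) (fun s => h (t+s)) =
        (t:ℂ) * cInt μ (FF h t) := by
    intro t ht
    rw [cInt_restrict μ measurableSet_Ico, FF_eq h1 ht]
  refine ContinuousOn.congr (f := fun t : ℝ => (t:ℂ) * cInt μ (FF h t)) ?_ hagree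
  intro t₀ ht₀
  have htend : ∀ (m : Measure ℝ), IsFiniteMeasure m →
      Tendsto (fun t => ∫ s, FF h t s ∂m) (𝓝[Icc (0:ℝ) 1] t₀) (𝓝 (∫ s, FF h t₀ s ∂m)) := by
    intro m hm
    refine tendsto_integral_filter_of_dominated_convergence (fun _ => M) ?_ ?_ ?_ ?_
    · refine Filter.Eventually.of_forall (fun t => ?_)
      have : FF h t = (Ici (0:ℝ)).indicator (fun s' => hp h (t + s')) := rfl
      rw [this]
      exact (((hp_meas hcont).comp (measurable_const_add t)).indicator
        measurableSet_Ici).stronglyMeasurable.aestronglyMeasurable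
    · exact Filter.Eventually.of_forall (fun t =>
        Filter.Eventually.of_forall (fun s => FF_bound (h := h) hM hMnn t s))
    · exact integrable_const M
    · exact Filter.Eventually.of_forall (fun s => FF_tendsto hcont h1 ht₀ s)
  have h4 : Tendsto (fun t => cInt μ (FF h t)) (𝓝[Icc (0:ℝ) 1] t₀)
      (𝓝 (cInt μ (FF h t₀))) := by
    unfold cInt
    exact (((htend _ inferInstance).sub (htend _ inferInstance)).add
      (tendsto_const_nhds.mul ((htend _ inferInstance).sub (htend _ inferInstance))))
  exact (Complex.continuous_ofReal.continuousWithinAt.mul h4)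

end CAux

open CAux in
/-- Let `μ` be a finite complex Borel measure on `[0,1)` with
`t |μ|([0,1-t))` bounded as `t → 0⁺`. Then the derivation `D̄_μ ν = (Xν) * μ` on
`M[0,1)` is the adjoint of `T_μ : C₀[0,1) → C₀[0,1)`,
`(T_μ h)(t) = t ∫_{[0,1-t)} h(t+s) dμ(s)`, i.e. `⟨h, D̄_μ ν⟩ = ⟨T_μ h, ν⟩`; in
particular `D̄_μ` is weak-star continuous on `M[0,1) = C₀[0,1)*` (it is continuous
along every net that converges weak-star, i.e. tested against all `h ∈ C₀[0,1)`). -/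
theorem Dbar_adjoint_and_weak_star_continuous (μ : ComplexMeasure ℝ)
    (hμc : ConcOn μ (Ico 0 1))
    (hμb : ∃ C δ : ℝ, 0 < δ ∧ ∀ t : ℝ, 0 < t → t < δ →
      t * (cTV μ (Ico 0 (1 - t))).toReal ≤ C) :
    -- the adjoint identity ⟨h, D̄_μ ν⟩ = ⟨T_μ h, ν⟩
    (∀ ν ρ : ComplexMeasure ℝ, ConcOn ν (Ico 0 1) → IsXConv μ ν ρ →
      ∀ h : ℝ → ℂ, ContinuousOn h (Icc 0 1) → h 1 = 0 →
        cInt ρ h =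
          cInt ν fun t => (t : ℂ) *
            cInt (μ.restrict (Ico 0 (1 - t))) fun s => h (t + s)) ∧
    -- weak-star continuity of D̄_μ
    (∀ {ι : Type} (l : Filter ι) (ν : ι → ComplexMeasure ℝ) (ν₀ : ComplexMeasure ℝ)
        (ρ : ι → ComplexMeasure ℝ) (ρ₀ : ComplexMeasure ℝ),
      (∀ i, ConcOn (ν i) (Ico 0 1)) → ConcOn ν₀ (Ico 0 1) →
      (∀ i, IsXConv μ (ν i) (ρ i)) → IsXConv μ ν₀ ρ₀ →
      (∀ h : ℝ → ℂ, ContinuousOn h (Icc 0 1) → h 1 = 0 →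
        Tendsto (fun i => cInt (ν i) h) l (nhds (cInt ν₀ h))) →
      ∀ h : ℝ → ℂ, ContinuousOn h (Icc 0 1) → h 1 = 0 →
        Tendsto (fun i => cInt (ρ i) h) l (nhds (cInt ρ₀ h))) := by
  constructor
  · intro ν ρ hν hxc h hcont h1
    exact adjoint_key μ hμc ν ρ hν hxc h hcont h1
  · intro ι l ν ν₀ ρ ρ₀ hνc hν₀c hxc hxc₀ htend h hcont h1
    set g : ℝ → ℂ := fun t : ℝ =>
      (t:ℂ) * cInt (μ.restrict (Ico 0 (1-t))) (fun s => h (t+s)) with hgdef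
    have hg1 : g 1 = 0 := by
      rw [hgdef]
      simp only [sub_self, Ico_self, VectorMeasure.restrict_empty]
      rw [cInt_zero]
      simp
    have hgc : ContinuousOn g (Icc 0 1) := transpose_cont μ hcont h1
    have h0 := htend g hgc hg1
    have he : ∀ i, cInt (ρ i) h = cInt (ν i) g := fun i =>
      adjoint_key μ hμc (ν i) (ρ i) (hνc i) (hxc i) h hcont h1
    have he0 : cInt ρ₀ h = cInt ν₀ g :=
      adjoint_key μ hμc ν₀ ρ₀ hν₀c hxc₀ h hcont h1
    rw [show (fun i => cInt (ρ i) h) = fun i => cInt (ν i) g from funext he, he0]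
    exact h0
end
end

section
/- Let μ be an absolutely continuous finite complex Borel measure on [0,1) such that t·|μ|([0,1−t)) → 0 as t → 0⁺. Then the set E = { t·δ_t*μ : t ∈ [0,1) } ∪ {0} is norm-compact in M[0,1), where δ_t is the Dirac point measure at t and δ_t*μ denotes their convolution on [0,1). -/
open MeasureTheory Set Filter Topology
open scoped ENNReal NNReal

noncomputable section

/- ----------------- Auxiliary lemmas ----------------- -/

/-- The total variation of `volume.withDensityᵥ g` on the whole space is at most
`2 ∫ |g|`. -/
private lemma tv_univ_le {g : ℝ → ℝ} (hgm : Measurable g) (hgi : Integrable g volume) :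
    SignedMeasure.totalVariation (volume.withDensityᵥ g) Set.univ
      ≤ 2 * ENNReal.ofReal (∫ x, |g x|) := by
  have hfin1 : IsFiniteMeasure (volume.withDensity fun x => ENNReal.ofReal (g x)) :=
    isFiniteMeasure_withDensity_ofReal hgi.2
  have hfin2 : IsFiniteMeasure (volume.withDensity fun x => ENNReal.ofReal (-g x)) :=
    isFiniteMeasure_withDensity_ofReal hgi.neg.2
  have hSm : MeasurableSet {x : ℝ | 0 ≤ g x} := measurableSet_le measurable_const hgm
  have hz1 : (volume.withDensity fun x => ENNReal.ofReal (g x)) {x : ℝ | 0 ≤ g x}ᶜ = 0 := by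
    rw [withDensity_apply _ hSm.compl,
      setLIntegral_eq_zero_iff hSm.compl hgm.ennreal_ofReal]
    refine ae_of_all _ fun x hx => ?_
    have : ¬ (0 ≤ g x) := hx
    simp [ENNReal.ofReal_eq_zero, le_of_lt (not_le.1 this)]
  have hz2 : (volume.withDensity fun x => ENNReal.ofReal (-g x)) {x : ℝ | 0 ≤ g x} = 0 := by
    rw [withDensity_apply _ hSm,
      setLIntegral_eq_zero_iff hSm (f := fun x => ENNReal.ofReal (-g x)) hgm.neg.ennreal_ofReal]
    refine ae_of_all _ fun x hx => ?_
    have hx' : (0:ℝ) ≤ g x := hx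
    simp [ENNReal.ofReal_eq_zero, neg_nonpos.2 hx']
  have hmut : (volume.withDensity fun x => ENNReal.ofReal (g x)) ⟂ₘ
      (volume.withDensity fun x => ENNReal.ofReal (-g x)) :=
    ⟨{x : ℝ | 0 ≤ g x}ᶜ, hSm.compl, hz1, by rwa [compl_compl]⟩
  set j : JordanDecomposition ℝ :=
    @JordanDecomposition.mk ℝ _ (volume.withDensity fun x => ENNReal.ofReal (g x))
      (volume.withDensity fun x => ENNReal.ofReal (-g x)) hfin1 hfin2 hmut with hjdef
  have hj : SignedMeasure.toJordanDecomposition (volume.withDensityᵥ g) = j :=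
    SignedMeasure.toJordanDecomposition_eq (j := j)
      (by exact withDensityᵥ_eq_withDensity_pos_part_sub_withDensity_neg_part hgi)
  unfold MeasureTheory.SignedMeasure.totalVariation
  rw [hj]
  have hjp : j.posPart = volume.withDensity fun x => ENNReal.ofReal (g x) := rfl
  have hjn : j.negPart = volume.withDensity fun x => ENNReal.ofReal (-g x) := rfl
  rw [Measure.add_apply, hjp, hjn, withDensity_apply _ MeasurableSet.univ,
    withDensity_apply _ MeasurableSet.univ, Measure.restrict_univ,
    ofReal_integral_eq_lintegral_ofReal hgi.abs (ae_of_all _ fun x => abs_nonneg _), two_mul]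
  exact add_le_add (lintegral_mono fun x => ENNReal.ofReal_le_ofReal (le_abs_self _))
    (lintegral_mono fun x => ENNReal.ofReal_le_ofReal (neg_le_abs _))

/-- Real part of a complex `withDensityᵥ`. -/
private lemma re_withDensityᵥ {H : ℝ → ℂ} (hi : Integrable H volume) :
    ComplexMeasure.re (volume.withDensityᵥ H)
      = volume.withDensityᵥ (fun x => (H x).re) := by
  have hre_i : Integrable (fun x => (H x).re) volume := by
    have := hi.re; simpa [RCLike.re_to_complex] using this
  refine VectorMeasure.ext fun E hE => ?_
  rw [ComplexMeasure.re_apply, VectorMeasure.mapRange_apply _ Complex.continuous_re,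
    withDensityᵥ_apply hi hE, withDensityᵥ_apply hre_i hE]
  have := integral_re (μ := volume.restrict E) hi.integrableOn
  simpa [RCLike.re_to_complex] using this.symm

/-- Imaginary part of a complex `withDensityᵥ`. -/
private lemma im_withDensityᵥ {H : ℝ → ℂ} (hi : Integrable H volume) :
    ComplexMeasure.im (volume.withDensityᵥ H)
      = volume.withDensityᵥ (fun x => (H x).im) := by
  have him_i : Integrable (fun x => (H x).im) volume := by
    have := hi.im; simpa [RCLike.im_to_complex] using this
  refine VectorMeasure.ext fun E hE => ?_
  rw [ComplexMeasure.im_apply, VectorMeasure.mapRange_apply _ Complex.continuous_im,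
    withDensityᵥ_apply hi hE, withDensityᵥ_apply him_i hE]
  have := integral_im (μ := volume.restrict E) hi.integrableOn
  simpa [RCLike.im_to_complex] using this.symm

/-- The `cTV` total variation of `volume.withDensityᵥ H` on the whole space is at most
`4 ∫ ‖H‖`. -/
private lemma cTV_bound {H : ℝ → ℂ} (hm : Measurable H) (hi : Integrable H volume) :
    (cTV (volume.withDensityᵥ H) Set.univ).toReal ≤ 4 * ∫ x, ‖H x‖ := by
  have hre_i : Integrable (fun x => (H x).re) volume := by
    have := hi.re; simpa [RCLike.re_to_complex] using this
  have him_i : Integrable (fun x => (H x).im) volume := by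
    have := hi.im; simpa [RCLike.im_to_complex] using this
  have hre : ComplexMeasure.re (volume.withDensityᵥ H)
      = volume.withDensityᵥ (fun x => (H x).re) := re_withDensityᵥ hi
  have him : ComplexMeasure.im (volume.withDensityᵥ H)
      = volume.withDensityᵥ (fun x => (H x).im) := im_withDensityᵥ hi
  have hbr : (∫ x, |(H x).re|) ≤ ∫ x, ‖H x‖ :=
    integral_mono hre_i.abs hi.norm fun x => by
      simpa using Complex.abs_re_le_norm (H x)
  have hbi : (∫ x, |(H x).im|) ≤ ∫ x, ‖H x‖ :=
    integral_mono him_i.abs hi.norm fun x => by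
      simpa using Complex.abs_im_le_norm (H x)
  have h1 : SignedMeasure.totalVariation (ComplexMeasure.re (volume.withDensityᵥ H)) univ
      ≤ 2 * ENNReal.ofReal (∫ x, ‖H x‖) := by
    rw [hre]
    exact le_trans (tv_univ_le (Complex.measurable_re.comp hm) hre_i)
      (mul_le_mul_right (ENNReal.ofReal_le_ofReal hbr) 2)
  have h2 : SignedMeasure.totalVariation (ComplexMeasure.im (volume.withDensityᵥ H)) univ
      ≤ 2 * ENNReal.ofReal (∫ x, ‖H x‖) := by
    rw [him]
    exact le_trans (tv_univ_le (Complex.measurable_im.comp hm) him_i)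
      (mul_le_mul_right (ENNReal.ofReal_le_ofReal hbi) 2)
  have hsum : cTV (volume.withDensityᵥ H) univ ≤ 4 * ENNReal.ofReal (∫ x, ‖H x‖) := by
    have hcTV : cTV (volume.withDensityᵥ H) univ
        = SignedMeasure.totalVariation (ComplexMeasure.re (volume.withDensityᵥ H)) univ
          + SignedMeasure.totalVariation (ComplexMeasure.im (volume.withDensityᵥ H)) univ := by
      rw [cTV, Measure.add_apply]
    rw [hcTV]
    refine le_trans (add_le_add h1 h2) ?_
    rw [← add_mul]
    norm_num
  have h4 : (4 : ℝ≥0∞) * ENNReal.ofReal (∫ x, ‖H x‖) ≠ ⊤ :=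
    ENNReal.mul_ne_top (by norm_num) ENNReal.ofReal_ne_top
  have := ENNReal.toReal_mono h4 hsum
  rw [ENNReal.toReal_mul, ENNReal.toReal_ofReal (integral_nonneg fun x => norm_nonneg _)] at this
  simpa using this

/-- Continuity of translation in `L¹`. -/
private lemma tendsto_L1_translate {g : ℝ → ℂ} (hgi : Integrable g volume) :
    Tendsto (fun s : ℝ => ∫ x, ‖g (x - s) - g x‖) (𝓝 0) (𝓝 0) := by
  rw [Metric.tendsto_nhds]
  intro ε hε
  obtain ⟨q, hq_supp, hq_close, hq_cont, hq_int⟩ :=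
    hgi.exists_hasCompactSupport_integral_sub_le (show (0:ℝ) < ε/4 by linarith)
  obtain ⟨R0, hR0⟩ := hq_supp.isBounded.subset_closedBall 0
  set R := max R0 0 with hRdef
  have hRsup : tsupport q ⊆ Icc (-R) R := by
    refine subset_trans hR0 ?_
    intro x hx
    rw [Metric.mem_closedBall, Real.dist_eq, sub_zero] at hx
    have h1 : |x| ≤ R := le_trans hx (le_max_left _ _)
    exact abs_le.1 h1
  set M := (volume (Icc (-(R+1)) (R+1))).toReal with hMdef
  have hM0 : 0 ≤ M := ENNReal.toReal_nonneg
  obtain ⟨δ, hδ0, hδ⟩ := Metric.uniformContinuous_iff.mp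
    (hq_supp.uniformContinuous_of_continuous hq_cont) (ε/(4*(M+1))) (by positivity)
  filter_upwards [Metric.ball_mem_nhds (0:ℝ) (lt_min hδ0 one_pos)] with s hs
  rw [mem_ball_zero_iff, Real.norm_eq_abs] at hs
  have hs1 : |s| ≤ 1 := le_of_lt (lt_of_lt_of_le hs (min_le_right _ _))
  have hsδ : |s| < δ := lt_of_lt_of_le hs (min_le_left _ _)
  have int1 : Integrable (fun x => g (x - s) - q (x - s)) volume :=
    (hgi.sub hq_int).comp_sub_right s
  have int2 : Integrable (fun x => q (x - s) - q x) volume :=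
    (hq_int.comp_sub_right s).sub hq_int
  have int3 : Integrable (fun x => q x - g x) volume := hq_int.sub hgi
  have hpt : ∀ x, ‖g (x - s) - g x‖
      ≤ ‖g (x-s) - q (x-s)‖ + ‖q (x-s) - q x‖ + ‖q x - g x‖ := by
    intro x
    have := dist_triangle4 (g (x-s)) (q (x-s)) (q x) (g x)
    simpa [dist_eq_norm] using this
  have hIle : ∫ x, ‖g (x-s) - g x‖
      ≤ (∫ x, ‖g (x-s) - q (x-s)‖) + (∫ x, ‖q (x-s) - q x‖) + ∫ x, ‖q x - g x‖ := by
    calc ∫ x, ‖g (x-s) - g x‖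
        ≤ ∫ x, (‖g (x-s) - q (x-s)‖ + ‖q (x-s) - q x‖ + ‖q x - g x‖) :=
          integral_mono ((hgi.comp_sub_right s).sub hgi).norm
            ((int1.norm.add int2.norm).add int3.norm) hpt
      _ = _ := by
          have int12 : Integrable
              (fun x => ‖g (x-s) - q (x-s)‖ + ‖q (x-s) - q x‖) volume :=
            int1.norm.add int2.norm
          rw [integral_add int12 int3.norm, integral_add int1.norm int2.norm]
  have e1 : ∫ x, ‖g (x-s) - q (x-s)‖ = ∫ x, ‖g x - q x‖ :=
    integral_sub_right_eq_self (fun x => ‖g x - q x‖) s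
  have e3 : ∫ x, ‖q x - g x‖ = ∫ x, ‖g x - q x‖ := by
    congr 1; funext x; rw [norm_sub_rev]
  have hmid : ∫ x, ‖q (x - s) - q x‖ ≤ (ε/(4*(M+1))) * M := by
    have hvan : ∀ x ∉ Icc (-(R+1)) (R+1), ‖q (x-s) - q x‖ = 0 := by
      intro x hx
      rw [mem_Icc, not_and_or, not_le, not_le] at hx
      have hx1 : q x = 0 := by
        refine image_eq_zero_of_notMem_tsupport fun hmem => ?_
        have := hRsup hmem
        rw [mem_Icc] at this
        rcases hx with hx | hx <;> linarith
      have hx2 : q (x - s) = 0 := by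
        refine image_eq_zero_of_notMem_tsupport fun hmem => ?_
        have := hRsup hmem
        rw [mem_Icc] at this
        have habs := abs_le.1 hs1
        rcases hx with hx | hx <;> linarith [habs.1, habs.2]
      simp [hx1, hx2]
    rw [← setIntegral_eq_integral_of_forall_compl_eq_zero hvan]
    have hcont : Continuous fun x : ℝ => ‖q (x - s) - q x‖ :=
      ((hq_cont.comp (continuous_id.sub continuous_const)).sub hq_cont).norm
    calc ∫ x in Icc (-(R+1)) (R+1), ‖q (x-s) - q x‖
        ≤ ∫ x in Icc (-(R+1)) (R+1), (ε/(4*(M+1))) := by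
          refine setIntegral_mono_on (hcont.integrableOn_Icc)
            (integrableOn_const measure_Icc_lt_top.ne) measurableSet_Icc
            (fun x _ => ?_)
          have hdist : dist (x - s) x < δ := by
            rw [Real.dist_eq, show x - s - x = -s from by ring, abs_neg]
            exact hsδ
          have := hδ hdist
          rw [dist_eq_norm] at this
          exact le_of_lt this
      _ = (ε/(4*(M+1))) * M := by
          rw [setIntegral_const, smul_eq_mul, mul_comm]
          rfl
  have hmlt : ε/(4*(M+1)) * M ≤ ε/4 := by
    have h1 : ε/(4*(M+1)) * M ≤ ε/(4*(M+1)) * (M+1) :=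
      mul_le_mul_of_nonneg_left (by linarith) (by positivity)
    have h2 : ε/(4*(M+1)) * (M+1) = ε/4 := by field_simp
    linarith
  have hW0 : 0 ≤ ∫ x, ‖g (x-s) - g x‖ := integral_nonneg fun x => norm_nonneg _
  rw [Real.dist_eq, sub_zero, abs_of_nonneg hW0]
  rw [e1, e3] at hIle
  have : ∫ x, ‖g (x-s) - g x‖ ≤ ε/4 + ε/4 + ε/4 := by linarith [hq_close, hmid, hmlt]
  linarith

/-- Explicit density of `t • ((withDensityᵥ f).restrict [0,1-t)).map (·+t)`. -/
private lemma Fdensity {f : ℝ → ℂ} (hfm : Measurable f) (hfi : Integrable f volume) (τ : ℝ) :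
    (τ : ℂ) • (((volume.withDensityᵥ f : ComplexMeasure ℝ).restrict (Ico 0 (1 - τ))).map
        fun s => s + τ)
      = volume.withDensityᵥ (fun x => (τ : ℂ) *
          (Iio (1:ℝ)).indicator (fun y => (Ici (0:ℝ)).indicator f (y - τ)) x) := by
  set g : ℝ → ℂ := (Ici (0:ℝ)).indicator f with hgdef
  have hgi : Integrable g volume := hfi.indicator measurableSet_Ici
  have hτint : Integrable (fun x => (τ : ℂ) *
      (Iio (1:ℝ)).indicator (fun y => g (y - τ)) x) volume :=
    (((hgi.comp_sub_right τ).indicator measurableSet_Iio).const_mul _)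
  refine VectorMeasure.ext fun E hE => ?_
  have hpre : MeasurableSet ((fun s : ℝ => s + τ) ⁻¹' E) :=
    hE.preimage (measurable_add_const τ)
  rw [VectorMeasure.smul_apply,
    VectorMeasure.map_apply _ (measurable_add_const τ) hE,
    VectorMeasure.restrict_apply _ measurableSet_Ico hpre,
    withDensityᵥ_apply hfi (hpre.inter measurableSet_Ico),
    withDensityᵥ_apply hτint hE]
  have step1 : ∫ x in E, (τ : ℂ) * (Iio (1:ℝ)).indicator (fun y => g (y - τ)) x
      = (τ : ℂ) * ∫ x in E, (Iio (1:ℝ)).indicator (fun y => g (y - τ)) x := by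
    rw [integral_const_mul]
  rw [step1, setIntegral_indicator measurableSet_Iio,
    ← integral_indicator (hE.inter measurableSet_Iio)]
  have step2 : ∫ x, (E ∩ Iio 1).indicator (fun y => g (y - τ)) x
      = ∫ x, ((fun s : ℝ => s + τ) ⁻¹' (E ∩ Iio 1)).indicator g x := by
    rw [← integral_add_right_eq_self
      (fun x => (E ∩ Iio 1).indicator (fun y => g (y - τ)) x) τ]
    congr 1; funext x
    by_cases hx : x + τ ∈ E ∩ Iio 1
    · rw [indicator_of_mem hx, indicator_of_mem (by exact hx), add_sub_cancel_right]
    · rw [indicator_of_notMem hx, indicator_of_notMem (by exact hx)]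
  rw [step2, integral_indicator ((hE.inter measurableSet_Iio).preimage (measurable_add_const τ)),
    setIntegral_indicator measurableSet_Ici]
  have hset : ((fun s : ℝ => s + τ) ⁻¹' (E ∩ Iio 1)) ∩ Ici 0
      = ((fun s : ℝ => s + τ) ⁻¹' E) ∩ Ico 0 (1 - τ) := by
    ext x
    simp only [mem_inter_iff, mem_preimage, mem_Iio, mem_Ici, mem_Ico]
    constructor
    · rintro ⟨⟨h1, h2⟩, h3⟩
      exact ⟨h1, h3, by linarith⟩
    · rintro ⟨h1, h2, h3⟩
      exact ⟨⟨h1, by linarith⟩, h2⟩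
  rw [hset, smul_eq_mul]

/-- Let `μ` be an absolutely continuous finite complex Borel measure
on `[0,1)` with `t |μ|([0,1-t)) → 0` as `t → 0⁺`. Then the set
`E = { t δ_t * μ : t ∈ [0,1) } ∪ {0}` is norm-compact in `M[0,1)` (with the total
variation norm); compactness is expressed sequentially, which is equivalent in the
metric given by the total variation norm. Here `t δ_t * μ` is realized explicitly as
`t • (push-forward of μ|_{[0,1-t)} under s ↦ s + t)`. -/
theorem dirac_convolutions_compact (μ : ComplexMeasure ℝ)
    (hμc : ConcOn μ (Ico 0 1))
    (hac : ∀ E : Set ℝ, MeasurableSet E → volume E = 0 → μ E = 0)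
    (h0 : Tendsto (fun t : ℝ => t * (cTV μ (Ico 0 (1 - t))).toReal)
      (nhdsWithin 0 (Ioi 0)) (nhds 0)) :
    ∀ u : ℕ → ComplexMeasure ℝ,
      (∀ k, u k = 0 ∨ ∃ t ∈ Ico (0 : ℝ) 1,
        u k = (t : ℂ) • ((μ.restrict (Ico 0 (1 - t))).map fun s => s + t)) →
      ∃ φ : ℕ → ℕ, StrictMono φ ∧
        ∃ ρ : ComplexMeasure ℝ,
          (ρ = 0 ∨ ∃ t ∈ Ico (0 : ℝ) 1,
            ρ = (t : ℂ) • ((μ.restrict (Ico 0 (1 - t))).map fun s => s + t)) ∧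
          Tendsto (fun k => (cTV (u (φ k) - ρ) univ).toReal) atTop (nhds 0) := by
  intro u hu
  -- choose parameters `t k`
  have hch : ∀ k, ∃ t : ℝ, t ∈ Ico (0:ℝ) 1 ∧
      u k = (t:ℂ) • ((μ.restrict (Ico 0 (1 - t))).map fun s => s + t) := by
    intro k
    rcases hu k with h | ⟨t, ht, he⟩
    · refine ⟨0, ⟨le_refl 0, one_pos⟩, ?_⟩
      rw [h, Complex.ofReal_zero]
      exact (zero_smul ℂ (((μ.restrict (Ico 0 (1 - (0:ℝ)))).map fun s => s + (0:ℝ)) :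
        ComplexMeasure ℝ)).symm
    · exact ⟨t, ht, he⟩
  choose t ht hut using hch
  -- Radon–Nikodym representation of μ
  have hrac : μ.re ≪ᵥ (volume : Measure ℝ).toENNRealVectorMeasure := by
    refine VectorMeasure.AbsolutelyContinuous.mk fun s hs h0' => ?_
    rw [Measure.toENNRealVectorMeasure_apply_measurable hs] at h0'
    rw [ComplexMeasure.re_apply, VectorMeasure.mapRange_apply _ Complex.continuous_re,
      hac s hs h0']
    simp
  have hiac : μ.im ≪ᵥ (volume : Measure ℝ).toENNRealVectorMeasure := by
    refine VectorMeasure.AbsolutelyContinuous.mk fun s hs h0' => ?_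
    rw [Measure.toENNRealVectorMeasure_apply_measurable hs] at h0'
    rw [ComplexMeasure.im_apply, VectorMeasure.mapRange_apply _ Complex.continuous_im,
      hac s hs h0']
    simp
  have hre : volume.withDensityᵥ (μ.re.rnDeriv volume) = μ.re :=
    SignedMeasure.withDensityᵥ_rnDeriv_eq _ _ hrac
  have him : volume.withDensityᵥ (μ.im.rnDeriv volume) = μ.im :=
    SignedMeasure.withDensityᵥ_rnDeriv_eq _ _ hiac
  set fr : ℝ → ℝ := μ.re.rnDeriv volume with hfrdef
  set fi : ℝ → ℝ := μ.im.rnDeriv volume with hfidef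
  have hfr_int : Integrable fr volume := SignedMeasure.integrable_rnDeriv _ _
  have hfi_int : Integrable fi volume := SignedMeasure.integrable_rnDeriv _ _
  set f : ℝ → ℂ := fun x => (fr x : ℂ) + (fi x : ℂ) * Complex.I with hfdef
  have hfm : Measurable f :=
    ((Complex.measurable_ofReal.comp (SignedMeasure.measurable_rnDeriv _ _)).add
      ((Complex.measurable_ofReal.comp (SignedMeasure.measurable_rnDeriv _ _)).mul_const _))
  have hfi' : Integrable f volume :=
    (hfr_int.ofReal.add (hfi_int.ofReal.mul_const _))
  have hμf : μ = volume.withDensityᵥ f := by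
    have h1 : ComplexMeasure.re (volume.withDensityᵥ f) = ComplexMeasure.re μ := by
      rw [re_withDensityᵥ hfi',
        show (volume.withDensityᵥ fun x => (f x).re) = volume.withDensityᵥ fr from
          WithDensityᵥEq.congr_ae (ae_of_all _ fun x => by simp [hfdef])]
      exact hre
    have h2 : ComplexMeasure.im (volume.withDensityᵥ f) = ComplexMeasure.im μ := by
      rw [im_withDensityᵥ hfi',
        show (volume.withDensityᵥ fun x => (f x).im) = volume.withDensityᵥ fi from
          WithDensityᵥEq.congr_ae (ae_of_all _ fun x => by simp [hfdef])]
      exact him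
    calc μ = SignedMeasure.toComplexMeasure (ComplexMeasure.re μ) (ComplexMeasure.im μ) :=
          (ComplexMeasure.toComplexMeasure_to_signedMeasure μ).symm
      _ = SignedMeasure.toComplexMeasure (ComplexMeasure.re (volume.withDensityᵥ f))
            (ComplexMeasure.im (volume.withDensityᵥ f)) := by rw [h1, h2]
      _ = volume.withDensityᵥ f := ComplexMeasure.toComplexMeasure_to_signedMeasure _
  -- the densities
  set g : ℝ → ℂ := (Ici (0:ℝ)).indicator f with hgdef
  have hgm : Measurable g := hfm.indicator measurableSet_Ici
  have hgi : Integrable g volume := hfi'.indicator measurableSet_Ici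
  set h : ℝ → ℝ → ℂ :=
    fun τ x => (τ:ℂ) * (Iio (1:ℝ)).indicator (fun y => g (y - τ)) x with hhdef
  have hhm : ∀ τ, Measurable (h τ) := fun τ =>
    (measurable_const.mul (((hgm.comp (measurable_id.sub measurable_const))).indicator
      measurableSet_Iio))
  have hhi : ∀ τ, Integrable (h τ) volume := fun τ =>
    ((hgi.comp_sub_right τ).indicator measurableSet_Iio).const_mul _
  have hrep : ∀ τ : ℝ,
      (τ:ℂ) • ((μ.restrict (Ico 0 (1 - τ))).map fun s => s + τ)
        = volume.withDensityᵥ (h τ) := by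
    intro τ
    rw [hμf]
    exact Fdensity hfm hfi' τ
  -- Bolzano–Weierstrass
  obtain ⟨L, hL, φ, hφ, hφt⟩ :=
    (isCompact_Icc (a := (0:ℝ)) (b := 1)).tendsto_subseq
      (x := t) (fun k => Ico_subset_Icc_self (ht k))
  refine ⟨φ, hφ, ?_⟩
  have hφt' : Tendsto (fun k => t (φ k)) atTop (𝓝 L) := hφt
  -- shared ending
  have ending : ∀ (ρ : ComplexMeasure ℝ) (HL : ℝ → ℂ), Measurable HL →
      Integrable HL volume → ρ = volume.withDensityᵥ HL →
      Tendsto (fun k => ∫ x, ‖h (t (φ k)) x - HL x‖) atTop (𝓝 0) →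
      Tendsto (fun k => (cTV (u (φ k) - ρ) univ).toReal) atTop (𝓝 0) := by
    intro ρ HL hHLm hHLi hρ htend
    have hrepk : ∀ k, u (φ k) - ρ
        = volume.withDensityᵥ (fun x => h (t (φ k)) x - HL x) := by
      intro k
      rw [hut (φ k), hrep (t (φ k)), hρ, withDensityᵥ_sub' (hhi _) hHLi]
    refine squeeze_zero (fun k => ENNReal.toReal_nonneg)
      (g := fun k => 4 * ∫ x, ‖h (t (φ k)) x - HL x‖) (fun k => ?_) ?_
    · rw [hrepk k]
      exact cTV_bound ((hhm _).sub hHLm) ((hhi _).sub hHLi)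
    · simpa using htend.const_mul (4:ℝ)
  by_cases hL1 : L < 1
  · -- limit inside [0,1)
    refine ⟨(L:ℂ) • ((μ.restrict (Ico 0 (1 - L))).map fun s => s + L),
      Or.inr ⟨L, ⟨hL.1, hL1⟩, rfl⟩, ?_⟩
    refine ending _ (h L) (hhm L) (hhi L) (hrep L) ?_
    -- quantitative bound
    have hbound : ∀ k, ∫ x, ‖h (t (φ k)) x - h L x‖ ≤
        (∫ x, ‖g (x - (t (φ k) - L)) - g x‖) + |t (φ k) - L| * ∫ x, ‖g x‖ := by
      intro k
      set τ := t (φ k) with hτdef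
      have hτ1 : |τ| ≤ 1 := by
        have h1 := (ht (φ k)).1
        have h2 := (ht (φ k)).2
        rw [hτdef, abs_of_nonneg h1]
        exact le_of_lt h2
      have hpt : ∀ x, ‖h τ x - h L x‖
          ≤ ‖g (x - τ) - g (x - L)‖ + |τ - L| * ‖g (x - L)‖ := by
        intro x
        by_cases hx : x ∈ Iio (1:ℝ)
        · simp only [hhdef, indicator_of_mem hx]
          have heq : (τ:ℂ) * g (x - τ) - (L:ℂ) * g (x - L)
              = (τ:ℂ) * (g (x - τ) - g (x - L)) + ((τ - L : ℝ):ℂ) * g (x - L) := by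
            push_cast; ring
          rw [heq]
          refine le_trans (norm_add_le _ _) ?_
          rw [norm_mul, norm_mul, Complex.norm_real, Complex.norm_real,
            Real.norm_eq_abs, Real.norm_eq_abs]
          have hmul : |τ| * ‖g (x - τ) - g (x - L)‖ ≤ 1 * ‖g (x - τ) - g (x - L)‖ :=
            mul_le_mul_of_nonneg_right hτ1 (norm_nonneg _)
          rw [one_mul] at hmul
          linarith
        · simp only [hhdef, indicator_of_notMem hx, mul_zero, sub_zero, norm_zero]
          positivity
      have intA : Integrable (fun x => ‖g (x - τ) - g (x - L)‖) volume :=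
        ((hgi.comp_sub_right τ).sub (hgi.comp_sub_right L)).norm
      have intB : Integrable (fun x => |τ - L| * ‖g (x - L)‖) volume :=
        ((hgi.comp_sub_right L).norm).const_mul _
      have intAB : Integrable
          (fun x => ‖g (x - τ) - g (x - L)‖ + |τ - L| * ‖g (x - L)‖) volume :=
        intA.add intB
      have intH : Integrable (fun x => ‖h τ x - h L x‖) volume :=
        ((hhi τ).sub (hhi L)).norm
      refine le_trans (integral_mono intH intAB hpt) ?_
      rw [integral_add intA intB, integral_const_mul]
      have e1 : ∫ x, ‖g (x - τ) - g (x - L)‖ = ∫ x, ‖g (x - (τ - L)) - g x‖ := by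
        calc ∫ x, ‖g (x - τ) - g (x - L)‖
            = ∫ x, (fun y => ‖g (y - (τ - L)) - g y‖) (x - L) := by
              congr 1; funext x
              show _ = ‖g (x - L - (τ - L)) - g (x - L)‖
              rw [show x - L - (τ - L) = x - τ from by ring]
          _ = ∫ x, ‖g (x - (τ - L)) - g x‖ := by
              exact integral_sub_right_eq_self (fun y => ‖g (y - (τ - L)) - g y‖) L
      have e2 : ∫ x, ‖g (x - L)‖ = ∫ x, ‖g x‖ :=
        integral_sub_right_eq_self (fun x => ‖g x‖) L
      rw [e1, e2]
    have hδ0 : Tendsto (fun k => t (φ k) - L) atTop (𝓝 0) := by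
      have := hφt'.sub (tendsto_const_nhds (x := L))
      simpa using this
    have hA : Tendsto (fun k => ∫ x, ‖g (x - (t (φ k) - L)) - g x‖) atTop (𝓝 0) :=
      (tendsto_L1_translate hgi).comp hδ0
    have hB : Tendsto (fun k => |t (φ k) - L| * ∫ x, ‖g x‖) atTop (𝓝 0) := by
      have := (hδ0.abs).mul_const (∫ x, ‖g x‖)
      simpa using this
    exact squeeze_zero (fun k => integral_nonneg fun x => norm_nonneg _) hbound
      (by simpa using hA.add hB)
  · -- limit at 1 : the measures go to 0
    have hL1' : L = 1 := le_antisymm hL.2 (not_lt.1 hL1)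
    refine ⟨0, Or.inl rfl, ?_⟩
    refine ending 0 0 measurable_const (integrable_zero _ _ _) (withDensityᵥ_zero).symm ?_
    set ν : Measure ℝ := volume.withDensity (fun y => (‖g y‖₊ : ℝ≥0∞)) with hνdef
    haveI hνfin : IsFiniteMeasure ν := isFiniteMeasure_withDensity hgi.2.ne
    have keyA : ∀ A : Set ℝ, MeasurableSet A → ∫ x in A, ‖g x‖ = (ν A).toReal := by
      intro A hA
      rw [hνdef, withDensity_apply _ hA]
      have hl : ∫⁻ x in A, (‖g x‖₊ : ℝ≥0∞) = ENNReal.ofReal (∫ x in A, ‖g x‖) := by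
        rw [ofReal_integral_eq_lintegral_ofReal hgi.norm.integrableOn
          (ae_of_all _ fun x => norm_nonneg _)]
        congr 1
        funext x
        rw [ofReal_norm, enorm_eq_nnnorm]
      rw [hl, ENNReal.toReal_ofReal (integral_nonneg fun x => norm_nonneg _)]
    have hb : ∀ τ : ℝ, |τ| ≤ 1 → ∫ x, ‖h τ x‖ ≤ (ν (Iio (1 - τ))).toReal := by
      intro τ hτ
      have hpt : ∀ x, ‖h τ x‖ ≤ (Iio (1:ℝ)).indicator (fun y => ‖g (y - τ)‖) x := by
        intro x
        by_cases hx : x ∈ Iio (1:ℝ)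
        · simp only [hhdef, indicator_of_mem hx, norm_mul, Complex.norm_real,
            Real.norm_eq_abs]
          exact mul_le_of_le_one_left (norm_nonneg _) hτ
        · simp [hhdef, indicator_of_notMem hx]
      have hstep : ∫ x, (Iio (1:ℝ)).indicator (fun y => ‖g (y - τ)‖) x
          = ∫ x in Iio (1 - τ), ‖g x‖ := by
        calc ∫ x, (Iio (1:ℝ)).indicator (fun y => ‖g (y - τ)‖) x
            = ∫ x, (Iio (1:ℝ)).indicator (fun y => ‖g (y - τ)‖) (x + τ) :=
              (integral_add_right_eq_self _ τ).symm
          _ = ∫ x, (Iio (1 - τ)).indicator (fun y => ‖g y‖) x := by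
              congr 1; funext x
              by_cases hx : x + τ < 1
              · have hx' : x < 1 - τ := by linarith
                rw [indicator_of_mem (by exact hx), indicator_of_mem (by exact hx'),
                  add_sub_cancel_right]
              · have hx' : ¬ x < 1 - τ := fun hc => hx (by linarith)
                rw [indicator_of_notMem (by exact hx), indicator_of_notMem (by exact hx')]
          _ = ∫ x in Iio (1 - τ), ‖g x‖ := integral_indicator measurableSet_Iio
      calc ∫ x, ‖h τ x‖
          ≤ ∫ x, (Iio (1:ℝ)).indicator (fun y => ‖g (y - τ)‖) x :=
            integral_mono (hhi τ).norm
              ((hgi.comp_sub_right τ).norm.indicator measurableSet_Iio) hpt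
        _ = (ν (Iio (1 - τ))).toReal := by rw [hstep, keyA _ measurableSet_Iio]
    have hIic : ν (Iic (0:ℝ)) = 0 := by
      have h1 : ν (Iio (0:ℝ)) = 0 := by
        rw [hνdef, withDensity_apply _ measurableSet_Iio,
          setLIntegral_eq_zero_iff measurableSet_Iio hgm.nnnorm.coe_nnreal_ennreal]
        refine ae_of_all _ fun x hx => ?_
        rw [mem_Iio] at hx
        have hg0 : g x = 0 := by
          rw [hgdef, indicator_of_notMem (by simpa using not_le.2 hx)]
        simp [hg0]
      have h2 : ν {(0:ℝ)} = 0 :=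
        withDensity_absolutelyContinuous volume _ Real.volume_singleton
      rw [← Iio_union_right]
      exact measure_union_null h1 h2
    have hseq : Tendsto (fun n : ℕ => ν (Iio (1/((n:ℝ)+1)))) atTop (𝓝 0) := by
      have hmono : Antitone (fun n : ℕ => Iio (1/((n:ℝ)+1))) := by
        intro m n hmn
        refine Iio_subset_Iio ?_
        have hc : (m:ℝ) + 1 ≤ (n:ℝ) + 1 := by exact_mod_cast Nat.succ_le_succ hmn
        exact one_div_le_one_div_of_le (by positivity) hc
      have hlim := tendsto_measure_iInter_atTop (μ := ν)
        (fun n => measurableSet_Iio.nullMeasurableSet) hmono ⟨0, measure_ne_top _ _⟩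
      have hint : (⋂ n : ℕ, Iio (1/((n:ℝ)+1))) = Iic 0 := by
        ext x
        simp only [mem_iInter, mem_Iio, mem_Iic]
        constructor
        · intro hx
          by_contra hx0
          push_neg at hx0
          obtain ⟨n, hn⟩ := exists_nat_one_div_lt hx0
          exact absurd (hx n) (not_lt.2 hn.le)
        · intro hx n
          exact lt_of_le_of_lt hx (by positivity)
      rw [hint, hIic] at hlim
      simpa [Function.comp_def] using hlim
    have hν0 : Tendsto (fun k => ν (Iio (1 - t (φ k)))) atTop (𝓝 0) := by
      rw [ENNReal.tendsto_nhds_zero]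
      intro ε hε
      obtain ⟨n, hn⟩ := ((ENNReal.tendsto_nhds_zero.1 hseq) ε hε).exists
      have h1t : Tendsto (fun k => 1 - t (φ k)) atTop (𝓝 (0:ℝ)) := by
        have := (tendsto_const_nhds (x := (1:ℝ))).sub hφt'
        rw [hL1'] at this
        simpa using this
      have hev : ∀ᶠ k in atTop, 1 - t (φ k) < 1/((n:ℝ)+1) :=
        h1t (Iio_mem_nhds (by positivity))
      filter_upwards [hev] with k hk
      exact le_trans (measure_mono (Iio_subset_Iio hk.le)) hn
    have hνtoReal : Tendsto (fun k => (ν (Iio (1 - t (φ k)))).toReal) atTop (𝓝 0) := by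
      have := (ENNReal.tendsto_toReal (a := 0) (by simp)).comp hν0
      simpa [Function.comp_def] using this
    have htail : Tendsto (fun k => ∫ x, ‖h (t (φ k)) x‖) atTop (𝓝 0) := by
      refine squeeze_zero (fun k => integral_nonneg fun x => norm_nonneg _)
        (fun k => hb (t (φ k)) ?_) hνtoReal
      have h1 := (ht (φ k)).1
      have h2 := (ht (φ k)).2
      rw [abs_of_nonneg h1]
      exact le_of_lt h2
    simpa using htail
end
end

section
/- A continuous linear operator T on L¹_loc(ℝ⁺) is compact (maps some neighbourhood of 0 to a relatively compact set) if and only if there exists m ∈ ℕ such that for every n ∈ ℕ the operator T_{nm} = R_n T S_m : L¹[0,m) → L¹[0,n) is compact and R_n T = T_{nm} R_m. -/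
open MeasureTheory Set Filter Topology

noncomputable section

/-- The Banach space `L¹[0,n)`. -/
abbrev LpIco (n : ℕ) := Lp ℂ 1 (volume.restrict (Ico (0 : ℝ) (n : ℝ)))

/-- `L¹_loc(ℝ⁺)`, realized as the (projective limit) submodule of compatible families in
`Π n, L¹[0,n)`; the `n`-th component plays the role of the restriction `R_n f`. -/
def L1locSub : Submodule ℂ (Π n : ℕ, LpIco n) where
  carrier := {F | ∀ n : ℕ,
    (F n : ℝ → ℂ) =ᵐ[volume.restrict (Ico (0 : ℝ) (n : ℝ))] (F (n + 1) : ℝ → ℂ)}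
  add_mem' := by
    intro F G hF hG n
    have hsub : Ico (0 : ℝ) (n : ℝ) ⊆ Ico (0 : ℝ) ((n : ℕ) + 1 : ℕ) := by
      apply Ico_subset_Ico_right; exact_mod_cast Nat.le_succ n
    have h2 := (Lp.coeFn_add (F (n + 1)) (G (n + 1))).filter_mono
      (ae_mono (Measure.restrict_mono hsub le_rfl))
    filter_upwards [hF n, hG n, Lp.coeFn_add (F n) (G n), h2] with t h1 h1' h3 h4
    show ((F n + G n : LpIco n) : ℝ → ℂ) t = ((F (n+1) + G (n+1) : LpIco (n+1)) : ℝ → ℂ) t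
    rw [h3, h4]; simp [h1, h1']
  zero_mem' := by
    intro n
    have hsub : Ico (0 : ℝ) (n : ℝ) ⊆ Ico (0 : ℝ) ((n : ℕ) + 1 : ℕ) := by
      apply Ico_subset_Ico_right; exact_mod_cast Nat.le_succ n
    have h2 := (Lp.coeFn_zero ℂ 1 (volume.restrict (Ico (0 : ℝ) ((n + 1 : ℕ) : ℝ)))).filter_mono
      (ae_mono (Measure.restrict_mono hsub le_rfl))
    filter_upwards [Lp.coeFn_zero ℂ 1 (volume.restrict (Ico (0 : ℝ) (n : ℝ))), h2] with t h1 h3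
    show ((0 : LpIco n) : ℝ → ℂ) t = ((0 : LpIco (n+1)) : ℝ → ℂ) t
    rw [h1, h3]
  smul_mem' := by
    intro c F hF n
    have hsub : Ico (0 : ℝ) (n : ℝ) ⊆ Ico (0 : ℝ) ((n : ℕ) + 1 : ℕ) := by
      apply Ico_subset_Ico_right; exact_mod_cast Nat.le_succ n
    have h2 := (Lp.coeFn_smul c (F (n + 1))).filter_mono
      (ae_mono (Measure.restrict_mono hsub le_rfl))
    filter_upwards [hF n, Lp.coeFn_smul c (F n), h2] with t h1 h3 h4
    show ((c • F n : LpIco n) : ℝ → ℂ) t = ((c • F (n+1) : LpIco (n+1)) : ℝ → ℂ) t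
    rw [h3, h4]; simp [h1]

/-- `L¹_loc(ℝ⁺)` as a type. -/
abbrev L1loc := ↥L1locSub

/-- The Fréchet (projective limit) topology on `L¹_loc`, given by the seminorms
`f ↦ ‖R_n f‖_{L¹[0,n)}`. -/
instance L1locTop : TopologicalSpace L1loc :=
  ⨅ n : ℕ, TopologicalSpace.induced (fun F : L1loc => F.1 n) inferInstance

/-- The weak topology `σ(L¹_loc, (L¹_loc)*)` on `L¹_loc`. -/
def L1locWeak : TopologicalSpace L1loc :=
  ⨅ (φ : L1loc →ₗ[ℂ] ℂ) (_ : Continuous φ), TopologicalSpace.induced (⇑φ) inferInstance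

/-! ### Auxiliary material -/

namespace L1locAux

/-- The measure `volume` restricted to `[0, n)`. -/
abbrev μI (n : ℕ) : Measure ℝ := volume.restrict (Ico (0 : ℝ) (n : ℝ))

lemma μI_mono {n m : ℕ} (h : n ≤ m) : μI n ≤ μI m :=
  Measure.restrict_mono (Ico_subset_Ico_right (by exact_mod_cast h)) le_rfl

/-- The restriction linear map `L¹[0,m) → L¹[0,n)` for `n ≤ m`. -/
def resFun {n m : ℕ} (h : n ≤ m) (f : LpIco m) : LpIco n :=
  ((Lp.memLp f).mono_measure (μI_mono h)).toLp ⇑f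

def resLin {n m : ℕ} (h : n ≤ m) : LpIco m →ₗ[ℂ] LpIco n where
  toFun := resFun h
  map_add' f g := by
    show resFun h (f + g) = resFun h f + resFun h g
    unfold resFun
    have hf := (Lp.memLp f).mono_measure (μI_mono h)
    have hg := (Lp.memLp g).mono_measure (μI_mono h)
    have hfg := (Lp.memLp (f + g)).mono_measure (μI_mono h)
    have hae : (⇑(f + g) : ℝ → ℂ) =ᵐ[μI n] ⇑f + ⇑g :=
      (Lp.coeFn_add f g).filter_mono (ae_mono (μI_mono h))
    rw [MemLp.toLp_congr hfg (hf.add hg) hae, MemLp.toLp_add]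
  map_smul' c f := by
    show resFun h (c • f) = c • resFun h f
    unfold resFun
    have hf := (Lp.memLp f).mono_measure (μI_mono h)
    have hcf := (Lp.memLp (c • f)).mono_measure (μI_mono h)
    have hae : (⇑(c • f) : ℝ → ℂ) =ᵐ[μI n] c • ⇑f :=
      (Lp.coeFn_smul c f).filter_mono (ae_mono (μI_mono h))
    rw [MemLp.toLp_congr hcf (hf.const_smul c) hae, MemLp.toLp_const_smul]

lemma resLin_ae {n m : ℕ} (h : n ≤ m) (f : LpIco m) :
    (⇑(resLin h f) : ℝ → ℂ) =ᵐ[μI n] ⇑f :=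
  MemLp.coeFn_toLp ((Lp.memLp f).mono_measure (μI_mono h))

lemma norm_resLin_le {n m : ℕ} (h : n ≤ m) (f : LpIco m) : ‖resLin h f‖ ≤ ‖f‖ := by
  rw [show resLin h f = ((Lp.memLp f).mono_measure (μI_mono h)).toLp ⇑f from rfl,
    Lp.norm_toLp, Lp.norm_def]
  exact ENNReal.toReal_mono (Lp.eLpNorm_ne_top f) (eLpNorm_mono_measure _ (μI_mono h))

/-- The restriction continuous linear map. -/
def resL {n m : ℕ} (h : n ≤ m) : LpIco m →L[ℂ] LpIco n :=
  LinearMap.mkContinuous (resLin h) 1 (by simpa using norm_resLin_le h)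

lemma resL_ae {n m : ℕ} (h : n ≤ m) (f : LpIco m) :
    (⇑(resL h f) : ℝ → ℂ) =ᵐ[μI n] ⇑f :=
  resLin_ae h f

/-- `L¹_loc` is (as it should be) a closed subspace of the product. -/
lemma closed_carrier : IsClosed ((L1locSub : Set (Π n : ℕ, LpIco n))) := by
  have hset : (L1locSub : Set (Π n : ℕ, LpIco n)) =
      ⋂ n : ℕ, {F : Π n : ℕ, LpIco n | resL (Nat.le_succ n) (F (n + 1)) = F n} := by
    ext F
    simp only [mem_iInter, mem_setOf_eq, SetLike.mem_coe]
    constructor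
    · intro hF n
      exact Lp.ext ((resL_ae (Nat.le_succ n) (F (n + 1))).trans (hF n).symm)
    · intro hF n
      have h2 := (resL_ae (Nat.le_succ n) (F (n + 1)))
      rw [hF n] at h2
      exact h2
  rw [hset]
  exact isClosed_iInter fun n =>
    isClosed_eq ((resL (Nat.le_succ n)).continuous.comp (continuous_apply (n + 1)))
      (continuous_apply n)

lemma mem_L1locSub_iff {F : Π n : ℕ, LpIco n} :
    F ∈ L1locSub ↔ ∀ n : ℕ,
      (F n : ℝ → ℂ) =ᵐ[μI n] (F (n + 1) : ℝ → ℂ) := Iff.rfl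

end L1locAux


namespace L1locAux

lemma topEq :
    (L1locTop : TopologicalSpace L1loc) =
      TopologicalSpace.induced (Subtype.val : L1loc → Π n : ℕ, LpIco n) inferInstance := by
  show (⨅ n : ℕ, TopologicalSpace.induced (fun F : L1loc => F.1 n) inferInstance) =
    TopologicalSpace.induced (Subtype.val : L1loc → Π n : ℕ, LpIco n)
      (⨅ n : ℕ, TopologicalSpace.induced (fun f : Π n : ℕ, LpIco n => f n) inferInstance)
  rw [induced_iInf]
  simp only [induced_compose]
  rfl

lemma inducing_val :
    Topology.IsInducing (Subtype.val : L1loc → Π n : ℕ, LpIco n) := ⟨topEq⟩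

lemma continuous_Rn (n : ℕ) : Continuous (fun F : L1loc => F.1 n) :=
  (continuous_apply n).comp inducing_val.continuous

lemma nhds_zero :
    (nhds (0 : L1loc)) =
      ⨅ n : ℕ, Filter.comap (fun F : L1loc => F.1 n) (nhds (0 : LpIco n)) := by
  show @nhds _ (⨅ n : ℕ, TopologicalSpace.induced (fun F : L1loc => F.1 n) inferInstance) 0 = _
  rw [_root_.nhds_iInf]
  congr 1
  funext n
  rw [nhds_induced]
  rfl

lemma norm_mono (F : L1loc) {n m : ℕ} (h : n ≤ m) : ‖F.1 n‖ ≤ ‖F.1 m‖ := by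
  induction m with
  | zero => exact le_of_eq (by rw [Nat.le_zero.mp h])
  | succ m ih =>
    rcases Nat.lt_or_ge n (m + 1) with hlt | hge
    · refine le_trans (ih (Nat.lt_succ_iff.mp hlt)) ?_
      rw [Lp.norm_def, Lp.norm_def, eLpNorm_congr_ae (F.2 m)]
      exact ENNReal.toReal_mono (Lp.eLpNorm_ne_top _)
        (eLpNorm_mono_measure _ (μI_mono (Nat.le_succ m)))
    · have : n = m + 1 := le_antisymm h hge
      subst this; rfl

lemma ball_subset_mem_nhds {U : Set L1loc} (hU : U ∈ nhds (0 : L1loc)) :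
    ∃ m : ℕ, ∃ ε > (0 : ℝ), {F : L1loc | ‖F.1 m‖ < ε} ⊆ U := by
  have hdir : Directed (· ≥ ·)
      (fun n : ℕ => Filter.comap (fun F : L1loc => F.1 n) (nhds (0 : LpIco n))) := by
    intro a b
    refine ⟨max a b, ?_, ?_⟩ <;>
    · intro s hs
      obtain ⟨t, ht, hsub⟩ := Filter.mem_comap.mp hs
      obtain ⟨ε, hε, hball⟩ := Metric.mem_nhds_iff.mp ht
      refine Filter.mem_comap.mpr ⟨Metric.ball 0 ε, Metric.ball_mem_nhds _ hε,
        fun F hF => hsub (hball ?_)⟩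
      simp only [mem_preimage, Metric.mem_ball, dist_zero_right] at hF ⊢
      exact lt_of_le_of_lt (norm_mono F (by simp)) hF
  rw [nhds_zero, Filter.mem_iInf_of_directed hdir] at hU
  obtain ⟨m, hm⟩ := hU
  obtain ⟨t, ht, hsub⟩ := Filter.mem_comap.mp hm
  obtain ⟨ε, hε, hball⟩ := Metric.mem_nhds_iff.mp ht
  refine ⟨m, ε, hε, fun F hF => hsub (hball ?_)⟩
  simpa [Metric.mem_ball, dist_zero_right] using hF

end L1locAux


namespace L1locAux

/-- Extension by zero of `g : L¹[0,m)` to a function on `ℝ`. -/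
def extFun {m : ℕ} (g : LpIco m) : ℝ → ℂ := (Ico (0 : ℝ) (m : ℝ)).indicator ⇑g

lemma extFun_mem {m : ℕ} (g : LpIco m) (n : ℕ) : MemLp (extFun g) 1 (μI n) := by
  have hvol : MemLp (extFun g) 1 volume := by
    constructor
    · exact ((Lp.stronglyMeasurable g).indicator measurableSet_Ico).aestronglyMeasurable
    · rw [extFun, eLpNorm_indicator_eq_eLpNorm_restrict measurableSet_Ico]
      exact Lp.eLpNorm_lt_top g
  exact hvol.restrict _

lemma extFun_congr {m : ℕ} {f₁ f₂ : ℝ → ℂ} (h : f₁ =ᵐ[μI m] f₂) :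
    (Ico (0 : ℝ) (m : ℝ)).indicator f₁ =ᵐ[volume] (Ico (0 : ℝ) (m : ℝ)).indicator f₂ := by
  have h' := (ae_restrict_iff' measurableSet_Ico).mp h
  filter_upwards [h'] with x hx
  by_cases hxm : x ∈ Ico (0 : ℝ) (m : ℝ)
  · simp [indicator_of_mem hxm, hx hxm]
  · simp [indicator_of_notMem hxm]

/-- Extension by zero as an element of `L¹_loc`. -/
def extMem {m : ℕ} (g : LpIco m) : L1loc :=
  ⟨fun n => (extFun_mem g n).toLp (extFun g), by
    intro n
    exact (MemLp.coeFn_toLp (extFun_mem g n)).trans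
      ((MemLp.coeFn_toLp (extFun_mem g (n + 1))).filter_mono
        (ae_mono (μI_mono (Nat.le_succ n)))).symm⟩

lemma extMem_apply {m : ℕ} (g : LpIco m) (n : ℕ) :
    (extMem g).1 n = (extFun_mem g n).toLp (extFun g) := rfl

/-- Extension by zero as a linear map to `L¹_loc`. -/
def extLin (m : ℕ) : LpIco m →ₗ[ℂ] L1loc where
  toFun := extMem
  map_add' g h := by
    apply Subtype.ext; funext n
    have hadd : extFun (g + h) =ᵐ[volume] extFun g + extFun h := by
      refine (extFun_congr (m := m) (Lp.coeFn_add g h)).trans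
        (Filter.Eventually.of_forall fun x => ?_)
      by_cases hx : x ∈ Ico (0 : ℝ) (m : ℝ) <;>
        simp [extFun, indicator_of_mem, indicator_of_notMem, hx]
    have hadd' : extFun (g + h) =ᵐ[μI n] extFun g + extFun h :=
      hadd.filter_mono (ae_mono Measure.restrict_le_self)
    show (extFun_mem (g + h) n).toLp (extFun (g + h)) =
      (extFun_mem g n).toLp (extFun g) + (extFun_mem h n).toLp (extFun h)
    rw [MemLp.toLp_congr (extFun_mem (g + h) n) ((extFun_mem g n).add (extFun_mem h n)) hadd',
      MemLp.toLp_add]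
  map_smul' c g := by
    apply Subtype.ext; funext n
    have hsmul : extFun (c • g) =ᵐ[volume] c • extFun g := by
      refine (extFun_congr (m := m) (Lp.coeFn_smul c g)).trans
        (Filter.Eventually.of_forall fun x => ?_)
      by_cases hx : x ∈ Ico (0 : ℝ) (m : ℝ) <;>
        simp [extFun, indicator_of_mem, indicator_of_notMem, hx]
    have hsmul' : extFun (c • g) =ᵐ[μI n] c • extFun g :=
      hsmul.filter_mono (ae_mono Measure.restrict_le_self)
    show (extFun_mem (c • g) n).toLp (extFun (c • g)) =
      c • (extFun_mem g n).toLp (extFun g)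
    rw [MemLp.toLp_congr (extFun_mem (c • g) n) ((extFun_mem g n).const_smul c) hsmul',
      MemLp.toLp_const_smul]

lemma ext_section {m : ℕ} (g : LpIco m) : (extMem g).1 m = g := by
  apply Lp.ext
  refine (MemLp.coeFn_toLp (extFun_mem g m)).trans ?_
  filter_upwards [ae_restrict_mem measurableSet_Ico] with x hx
  exact indicator_of_mem hx _

end L1locAux


open L1locAux in
/-- A continuous linear operator `T` on `L¹_loc(ℝ⁺)` is compact
(maps some `0`-neighbourhood to a relatively compact set) iff there is `m ∈ ℕ` such
that for every `n ∈ ℕ` the induced operator `T_{nm} : L¹[0,m) → L¹[0,n)` exists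
(i.e. `R_n T = T_{nm} R_m`) and is compact. -/
theorem compact_operator_iff (T : L1loc →ₗ[ℂ] L1loc) (hT : Continuous T) :
    (∃ U ∈ nhds (0 : L1loc), IsCompact (closure (⇑T '' U))) ↔
    ∃ m : ℕ, ∀ n : ℕ, ∃ Tnm : LpIco m →L[ℂ] LpIco n,
      IsCompactOperator (⇑Tnm) ∧
      ∀ F : L1loc, (T F).1 n = Tnm (F.1 m) := by
  constructor
  · rintro ⟨U, hU, hKcpt⟩
    set K := closure (⇑T '' U) with hKdef
    have hTU_K : ⇑T '' U ⊆ K := subset_closure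
    obtain ⟨m, ε, hε, hV⟩ := ball_subset_mem_nhds hU
    refine ⟨m, fun n => ?_⟩
    have hKn : IsCompact ((fun F : L1loc => F.1 n) '' K) := hKcpt.image (continuous_Rn n)
    obtain ⟨C, hC⟩ := hKn.isBounded.exists_norm_le
    -- the kernel of `R_m` is mapped into the kernel of `R_n ∘ T`
    have hker : ∀ F : L1loc, F.1 m = 0 → (T F).1 n = 0 := by
      intro F hF
      by_contra hne
      have hpos : 0 < ‖(T F).1 n‖ := norm_pos_iff.mpr hne
      obtain ⟨k, hk⟩ := exists_nat_gt (C / ‖(T F).1 n‖)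
      have hmem : ((k : ℂ) • F) ∈ U := by
        refine hV ?_
        show ‖((k : ℂ) • F).1 m‖ < ε
        have hsm : ((k : ℂ) • F).1 m = (k : ℂ) • F.1 m := rfl
        rw [hsm, hF, smul_zero, norm_zero]
        exact hε
      have hmemK : (T ((k : ℂ) • F)).1 n ∈ (fun F : L1loc => F.1 n) '' K :=
        ⟨_, hTU_K ⟨_, hmem, rfl⟩, rfl⟩
      have hb := hC _ hmemK
      rw [_root_.map_smul] at hb
      have heq : ‖((k : ℂ) • (T F)).1 n‖ = (k : ℝ) * ‖(T F).1 n‖ := by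
        show ‖(k : ℂ) • (T F).1 n‖ = _
        rw [norm_smul, Complex.norm_natCast]
      rw [heq] at hb
      have := (div_lt_iff₀ hpos).mp hk
      linarith
    -- the induced operator
    set Rlin : L1loc →ₗ[ℂ] LpIco n := (LinearMap.proj n).comp L1locSub.subtype with hRdef
    set Tlin : LpIco m →ₗ[ℂ] LpIco n := Rlin ∘ₗ T ∘ₗ extLin m with hTdef
    have hfact : ∀ F : L1loc, (T F).1 n = Tlin (F.1 m) := by
      intro F
      have h0 : (F - extMem (F.1 m)).1 m = 0 := by
        show F.1 m - (extMem (F.1 m)).1 m = 0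
        rw [ext_section]
        simp
      have hk0 := hker _ h0
      have h2 : (T F).1 n - (T (extMem (F.1 m))).1 n = 0 := by
        rw [map_sub] at hk0
        exact hk0
      have h3 : Tlin (F.1 m) = (T (extMem (F.1 m))).1 n := rfl
      rw [h3]
      exact sub_eq_zero.mp h2
    have hcpt : IsCompactOperator ⇑Tlin := by
      refine ⟨(fun F : L1loc => F.1 n) '' K, hKn, ?_⟩
      refine Filter.mem_of_superset (Metric.ball_mem_nhds _ hε) ?_
      intro g hg
      have hmem : extMem g ∈ U := by
        refine hV ?_
        show ‖(extMem g).1 m‖ < ε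
        rw [ext_section]
        simpa [dist_zero_right] using hg
      have : Tlin g = (T (extMem g)).1 n := rfl
      exact ⟨T (extMem g), hTU_K ⟨_, hmem, rfl⟩, this.symm⟩
    exact ⟨⟨Tlin, hcpt.continuous⟩, hcpt, hfact⟩
  · rintro ⟨m, h⟩
    choose Tnm hcpt hfact using h
    refine ⟨(fun F : L1loc => F.1 m) ⁻¹' Metric.ball 0 1, ?_, ?_⟩
    · rw [nhds_zero]
      exact Filter.mem_iInf_of_mem m
        (Filter.preimage_mem_comap (Metric.ball_mem_nhds _ one_pos))
    · -- compact sets absorbing the images in each coordinate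
      have hKn : ∀ n : ℕ, ∃ Kn : Set (LpIco n), IsCompact Kn ∧
          ⇑(Tnm n) '' Metric.ball 0 1 ⊆ Kn := fun n =>
        ⟨closure (⇑(Tnm n) '' Metric.ball 0 1),
          IsCompactOperator.isCompact_closure_image_ball
            (f := ((Tnm n) : LpIco m →ₗ[ℂ] LpIco n)) (hcpt n) 1,
          subset_closure⟩
      choose Kn hKc hKsub using hKn
      -- the candidate compact superset
      have hpiK : IsCompact (Set.univ.pi Kn ∩ (L1locSub : Set (Π n : ℕ, LpIco n))) :=
        (isCompact_univ_pi hKc).inter_right closed_carrier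
      have hSc : IsCompact ((Subtype.val : L1loc → _) ⁻¹' Set.univ.pi Kn) := by
        rw [inducing_val.isCompact_iff]
        have himg : (Subtype.val : L1loc → _) '' ((Subtype.val : L1loc → _) ⁻¹' Set.univ.pi Kn) =
            Set.univ.pi Kn ∩ (L1locSub : Set (Π n : ℕ, LpIco n)) := by
          rw [Set.image_preimage_eq_inter_range, Subtype.range_coe]
        rw [himg]
        exact hpiK
      have hSclosed : IsClosed ((Subtype.val : L1loc → _) ⁻¹' Set.univ.pi Kn) :=
        (isClosed_set_pi fun n _ => (hKc n).isClosed).preimage inducing_val.continuous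
      refine IsCompact.of_isClosed_subset hSc isClosed_closure (closure_minimal ?_ hSclosed)
      rintro y ⟨F, hF, rfl⟩
      intro n _
      show (T F).1 n ∈ Kn n
      rw [hfact n F]
      exact hKsub n ⟨F.1 m, hF, rfl⟩
end
end

section
/- If T is a weakly compact continuous linear operator on L¹_loc(ℝ⁺), then T is not injective unless T = 0; consequently, since every nonzero derivation D_μ f = (Xf)*μ (μ ∈ M_loc, μ ≠ 0) on L¹_loc is injective, there are no nonzero weakly compact derivations on L¹_loc. -/
open MeasureTheory Set Filter Topology

noncomputable section

namespace S13

def evalL (n : ℕ) : L1loc →ₗ[ℂ] LpIco n where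
  toFun F := F.1 n
  map_add' F G := rfl
  map_smul' c F := rfl

lemma compat_le (F : L1loc) {n m : ℕ} (h : n ≤ m) :
    (F.1 n : ℝ → ℂ) =ᵐ[volume.restrict (Ico (0:ℝ) (n:ℝ))] (F.1 m : ℝ → ℂ) := by
  induction m with
  | zero =>
    have : n = 0 := Nat.le_zero.mp h
    subst this; rfl
  | succ m ih =>
    rcases Nat.lt_or_ge n (m+1) with h' | h'
    · have hnm : n ≤ m := Nat.lt_succ_iff.mp h'
      have h2 : (F.1 m : ℝ → ℂ) =ᵐ[volume.restrict (Ico (0:ℝ) (n:ℝ))] (F.1 (m+1) : ℝ → ℂ) :=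
        (F.2 m).filter_mono (ae_mono (Measure.restrict_mono
          (Ico_subset_Ico_right (by exact_mod_cast hnm)) le_rfl))
      exact (ih hnm).trans h2
    · have : n = m + 1 := le_antisymm h h'
      subst this; rfl

lemma norm_mono (F : L1loc) {n m : ℕ} (h : n ≤ m) : ‖F.1 n‖ ≤ ‖F.1 m‖ := by
  rw [Lp.norm_def, Lp.norm_def]
  have h1 : eLpNorm (F.1 n : ℝ → ℂ) 1 (volume.restrict (Ico (0:ℝ) (n:ℝ)))
      = eLpNorm (F.1 m : ℝ → ℂ) 1 (volume.restrict (Ico (0:ℝ) (n:ℝ))) :=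
    eLpNorm_congr_ae (compat_le F h)
  have h2 : eLpNorm (F.1 m : ℝ → ℂ) 1 (volume.restrict (Ico (0:ℝ) (n:ℝ)))
      ≤ eLpNorm (F.1 m : ℝ → ℂ) 1 (volume.restrict (Ico (0:ℝ) (m:ℝ))) :=
    eLpNorm_mono_measure _ (Measure.restrict_mono
      (Ico_subset_Ico_right (by exact_mod_cast h)) le_rfl)
  exact ENNReal.toReal_mono (Lp.eLpNorm_ne_top _) (h1 ▸ h2)

lemma exists_ball (i : ℕ) (V : Set L1loc)
    (hV : V ∈ @nhds L1loc (TopologicalSpace.induced (fun F : L1loc => F.1 i) inferInstance) 0) :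
    ∃ ε > 0, ∀ F : L1loc, ‖F.1 i‖ < ε → F ∈ V := by
  rw [nhds_induced] at hV
  obtain ⟨W, hW, hWV⟩ := hV
  obtain ⟨ε, hε, hb⟩ := Metric.mem_nhds_iff.mp (by simpa using hW)
  exact ⟨ε, hε, fun F hF => hWV (hb (by simpa [Metric.mem_ball] using hF))⟩

lemma nhds_zero_basis {U : Set L1loc} (hU : U ∈ nhds (0 : L1loc)) :
    ∃ (N : ℕ) (ε : ℝ), 0 < ε ∧ ∀ F : L1loc, ‖F.1 N‖ < ε → F ∈ U := by
  have hU' : U ∈ ⨅ n : ℕ,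
      @nhds L1loc (TopologicalSpace.induced (fun F : L1loc => F.1 n) inferInstance) 0 := by
    have h := @_root_.nhds_iInf L1loc ℕ
      (fun n => TopologicalSpace.induced (fun F : L1loc => F.1 n) inferInstance) 0
    rw [← h]; exact hU
  obtain ⟨I, hIfin, V, hV, rfl⟩ := Filter.mem_iInf.mp hU'
  choose ε hε hball using fun i : ↑I => exists_ball i (V i) (hV i)
  rcases I.eq_empty_or_nonempty with h | ⟨i₀, hi₀⟩
  · refine ⟨0, 1, one_pos, fun F _ => ?_⟩
    subst h; simp
  · haveI : Fintype ↑I := hIfin.fintype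
    haveI : Nonempty ↑I := ⟨⟨i₀, hi₀⟩⟩
    set N := Finset.univ.sup (fun i : ↑I => (i : ℕ)) with hN
    set εm := Finset.univ.inf' Finset.univ_nonempty ε with hεm
    refine ⟨N, εm, ?_, fun F hF => ?_⟩
    · rw [hεm, Finset.lt_inf'_iff]
      exact fun i _ => hε i
    · refine Set.mem_iInter.mpr fun i => ?_
      apply hball i
      calc ‖F.1 i‖ ≤ ‖F.1 N‖ := norm_mono F (Finset.le_sup (Finset.mem_univ i))
        _ < εm := hF
        _ ≤ ε i := Finset.inf'_le _ (Finset.mem_univ i)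

lemma eval_continuous (n : ℕ) : Continuous (fun F : L1loc => F.1 n) :=
  continuous_iInf_dom (t₁ := fun n : ℕ =>
    TopologicalSpace.induced (fun F : L1loc => F.1 n) inferInstance) continuous_induced_dom

lemma stepA (T : L1loc →ₗ[ℂ] L1loc)
    (hw : ∃ U ∈ nhds (0 : L1loc), IsCompact (@closure _ L1locWeak (⇑T '' U))) :
    ∃ N : ℕ, ∀ F : L1loc, F.1 N = 0 → T F = 0 := by
  obtain ⟨U, hU, hK⟩ := hw
  obtain ⟨N, ε, hε, hball⟩ := nhds_zero_basis hU
  refine ⟨N, fun F hF => ?_⟩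
  by_contra hTF
  have hex : ∃ n, (T F).1 n ≠ 0 := by
    by_contra h; push_neg at h
    exact hTF (Subtype.ext (funext fun n => h n))
  obtain ⟨n, hn⟩ := hex
  obtain ⟨ψ, hψ1, hψ2⟩ := exists_dual_vector ℂ _ (norm_ne_zero_iff.mpr hn)
  set φ : L1loc →ₗ[ℂ] ℂ := ψ.toLinearMap.comp (evalL n) with hφ
  have hφcont : Continuous φ := ψ.continuous.comp (eval_continuous n)
  have hφweak : Continuous[L1locWeak, _] ⇑φ := by
    rw [continuous_iff_le_induced]
    exact iInf₂_le φ hφcont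
  have hφTF : φ (T F) ≠ 0 := by
    have : φ (T F) = (‖(T F).1 n‖ : ℂ) := hψ2
    rw [this]
    simpa using norm_ne_zero_iff.mpr hn
  have hmem : ∀ c : ℂ, c • T F ∈ @closure _ L1locWeak (⇑T '' U) := by
    intro c
    apply @subset_closure _ L1locWeak _
    refine ⟨c • F, hball _ ?_, by rw [T.map_smul]⟩
    have : ((c • F).1 N) = c • F.1 N := rfl
    rw [this, hF, smul_zero]
    simpa using hε
  have hcomp : IsCompact (⇑φ '' @closure _ L1locWeak (⇑T '' U)) :=
    hK.image hφcont
  obtain ⟨R, hR⟩ := hcomp.isBounded.subset_closedBall 0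
  set c : ℂ := (((|R| + 1) / ‖φ (T F)‖ : ℝ) : ℂ) with hc
  have h1 : φ (c • T F) ∈ Metric.closedBall (0:ℂ) R := hR ⟨_, hmem c, rfl⟩
  have h2 : ‖φ (c • T F)‖ = |R| + 1 := by
    rw [φ.map_smul, norm_smul, hc]
    have h0 : ‖φ (T F)‖ ≠ 0 := norm_ne_zero_iff.mpr hφTF
    rw [Complex.norm_real]
    rw [Real.norm_eq_abs, abs_div]
    rw [abs_of_nonneg (by positivity : (0:ℝ) ≤ |R| + 1), abs_of_nonneg (norm_nonneg _)]
    exact div_mul_cancel₀ _ h0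
  rw [Metric.mem_closedBall, dist_zero_right, h2] at h1
  have : |R| + 1 ≤ |R| := le_trans h1 (le_abs_self R)
  linarith

instance finIco (n : ℕ) : IsFiniteMeasure (volume.restrict (Ico (0:ℝ) (n:ℝ))) := by
  constructor
  rw [Measure.restrict_apply_univ, Real.volume_Ico]
  exact ENNReal.ofReal_lt_top

lemma memL1 {f : ℝ → ℂ} (hm : Measurable f) {C : ℝ} (hb : ∀ t, ‖f t‖ ≤ C) (n : ℕ) :
    MemLp f 1 (volume.restrict (Ico (0:ℝ) (n:ℝ))) :=
  MemLp.of_bound hm.aestronglyMeasurable C (Filter.Eventually.of_forall hb)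

def ofFun (f : ℝ → ℂ) (hm : Measurable f) (C : ℝ) (hb : ∀ t, ‖f t‖ ≤ C) : L1loc :=
  ⟨fun n => (memL1 hm hb n).toLp f, by
    intro n
    have h1 := (memL1 hm hb n).coeFn_toLp
    have hle : ((n:ℕ):ℝ) ≤ (((n+1:ℕ)):ℝ) := by exact_mod_cast Nat.le_succ n
    have h2 := ((memL1 hm hb (n+1)).coeFn_toLp).filter_mono
      (ae_mono (Measure.restrict_mono (Ico_subset_Ico_right hle) le_rfl))
    exact h1.trans h2.symm⟩

lemma ofFun_coe (f : ℝ → ℂ) (hm : Measurable f) (C : ℝ) (hb : ∀ t, ‖f t‖ ≤ C) (n : ℕ) :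
    ((ofFun f hm C hb).1 n : ℝ → ℂ) =ᵐ[volume.restrict (Ico (0:ℝ) (n:ℝ))] f :=
  (memL1 hm hb n).coeFn_toLp

lemma ofFun_eq_zero (f : ℝ → ℂ) (hm : Measurable f) (C : ℝ) (hb : ∀ t, ‖f t‖ ≤ C) (n : ℕ)
    (h0 : ∀ t ∈ Ico (0:ℝ) (n:ℝ), f t = 0) : (ofFun f hm C hb).1 n = 0 := by
  show (memL1 hm hb n).toLp f = 0
  have : f =ᵐ[volume.restrict (Ico (0:ℝ) (n:ℝ))] 0 :=
    (ae_restrict_mem measurableSet_Ico).mono fun t ht => h0 t ht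
  rw [MemLp.toLp_congr (memL1 hm hb n) (MemLp.zero) this, MemLp.toLp_zero]

/-- Separation: if `∫ g f = 0` for all bounded measurable `g` vanishing off `[0,m)`,
then `f = 0` a.e. on `[0,m)`. -/
lemma sep {m : ℝ} {f : ℝ → ℂ} (hfm : Measurable f)
    (hfi : Integrable f (volume.restrict (Ico (0:ℝ) m)))
    (h : ∀ g : ℝ → ℂ, Measurable g → (∃ C, ∀ t, ‖g t‖ ≤ C) →
      (∀ t, t ∉ Ico (0:ℝ) m → g t = 0) →
      ∫ t, g t * f t ∂(volume.restrict (Ico (0:ℝ) m)) = 0) :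
    f =ᵐ[volume.restrict (Ico (0:ℝ) m)] 0 := by
  set g : ℝ → ℂ := fun t => if t ∈ Ico (0:ℝ) m then
      (if f t = 0 then 0 else (starRingEnd ℂ) (f t) / ‖f t‖) else 0 with hg
  have hgm : Measurable g := by
    apply Measurable.ite measurableSet_Ico _ measurable_const
    apply Measurable.ite (hfm (measurableSet_singleton 0)) measurable_const
    exact ((Complex.continuous_conj.measurable.comp hfm)).div
      (Complex.continuous_ofReal.measurable.comp hfm.norm)
  have hgb : ∀ t, ‖g t‖ ≤ 1 := by
    intro t
    rw [hg]
    dsimp only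
    split_ifs with h1 h2
    · simp
    · rw [norm_div]
      rw [RingHomIsometric.norm_map]
      have : ‖f t‖ ≠ 0 := norm_ne_zero_iff.mpr h2
      rw [Complex.norm_real, Real.norm_eq_abs, abs_of_nonneg (norm_nonneg _)]
      rw [div_self this]
    · simp
  have hgf : ∀ t, g t * f t = (Ico (0:ℝ) m).indicator (fun t => (‖f t‖ : ℂ)) t := by
    intro t
    rw [hg]
    dsimp only
    by_cases h1 : t ∈ Ico (0:ℝ) m
    · rw [if_pos h1, indicator_of_mem h1]
      by_cases h2 : f t = 0
      · simp [h2]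
      · rw [if_neg h2]
        rw [div_mul_eq_mul_div, Complex.conj_mul']
        rw [pow_two, mul_div_assoc, div_self (by exact_mod_cast norm_ne_zero_iff.mpr h2), mul_one]
    · rw [if_neg h1, indicator_of_notMem h1, zero_mul]
  have h0 := h g hgm ⟨1, hgb⟩ (fun t ht => by rw [hg]; exact if_neg ht)
  have : ∫ t, g t * f t ∂(volume.restrict (Ico (0:ℝ) m))
      = ∫ t, (‖f t‖ : ℂ) ∂(volume.restrict (Ico (0:ℝ) m)) := by
    apply integral_congr_ae
    filter_upwards [ae_restrict_mem measurableSet_Ico] with t ht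
    rw [hgf t, indicator_of_mem ht]
  rw [this] at h0
  have hoR : ∫ t, (‖f t‖ : ℂ) ∂(volume.restrict (Ico (0:ℝ) m))
      = ((∫ t, ‖f t‖ ∂(volume.restrict (Ico (0:ℝ) m)) : ℝ) : ℂ) := integral_ofReal
  rw [hoR] at h0
  have hnorm : ∫ t, ‖f t‖ ∂(volume.restrict (Ico (0:ℝ) m)) = 0 := by
    exact_mod_cast h0
  have := (integral_eq_zero_iff_of_nonneg (fun t => norm_nonneg (f t)) hfi.norm).mp hnorm
  filter_upwards [this] with t ht
  simpa using ht

lemma re_apply (c : ComplexMeasure ℝ) (E : Set ℝ) : c.re E = (c E).re :=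
  VectorMeasure.mapRange_apply c Complex.continuous_re (f := Complex.reLm.toAddMonoidHom)

lemma im_apply (c : ComplexMeasure ℝ) (E : Set ℝ) : c.im E = (c E).im :=
  VectorMeasure.mapRange_apply c Complex.continuous_im (f := Complex.imLm.toAddMonoidHom)

lemma signed_apply (s : SignedMeasure ℝ) {E : Set ℝ} (hE : MeasurableSet E) :
    s E = (s.toJordanDecomposition.posPart E).toReal
      - (s.toJordanDecomposition.negPart E).toReal := by
  conv_lhs => rw [← s.toSignedMeasure_toJordanDecomposition]
  rw [JordanDecomposition.toSignedMeasure]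
  rw [VectorMeasure.sub_apply]
  rw [Measure.toSignedMeasure_apply_measurable hE, Measure.toSignedMeasure_apply_measurable hE]
  rfl

lemma cInt_zero_measure (f : ℝ → ℂ) : cInt (0 : ComplexMeasure ℝ) f = 0 := by
  have hre : (0 : ComplexMeasure ℝ).re = 0 := map_zero _
  have him : (0 : ComplexMeasure ℝ).im = 0 := map_zero _
  rw [cInt, hre, him, SignedMeasure.toJordanDecomposition_zero]
  simp

lemma indIco (a δ s u : ℝ) :
    (Ico (a+s) (a+δ+s)).indicator (1 : ℝ → ℂ) u
      = {p : ℝ × ℝ | a + p.1 ≤ p.2 ∧ p.2 < a + δ + p.1}.indicator (1 : ℝ × ℝ → ℂ) (s, u) := by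
  by_cases h : a + s ≤ u ∧ u < a + δ + s
  · rw [indicator_of_mem (by simpa [mem_Ico] using h), indicator_of_mem (by simpa using h)]
    rfl
  · rw [indicator_of_notMem (by simpa [mem_Ico] using h),
      indicator_of_notMem (by simpa using h)]

lemma swap_one (ν : Measure ℝ) [IsFiniteMeasure ν] {g : ℝ → ℂ} (hgm : Measurable g)
    {C : ℝ} (hgb : ∀ t, ‖g t‖ ≤ C) (a δ : ℝ) (hδ : 0 < δ) :
    ∫ s, (∫ u, g u * (Ico (a+s) (a+δ+s)).indicator (1 : ℝ → ℂ) u) ∂ν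
      = ∫ u, (ν (Ioc (u-a-δ) (u-a))).toReal • g u := by
  set S : Set (ℝ × ℝ) := {p : ℝ × ℝ | a + p.1 ≤ p.2 ∧ p.2 < a + δ + p.1} with hSdef
  have hS : MeasurableSet S :=
    (measurableSet_le (measurable_const.add measurable_fst) measurable_snd).inter
      (measurableSet_lt measurable_snd (measurable_const.add measurable_fst))
  have hSfin : (ν.prod volume) S < ⊤ := by
    rw [Measure.prod_apply hS]
    have hsect : ∀ s : ℝ, (Prod.mk s ⁻¹' S) = Ico (a+s) (a+δ+s) := by
      intro s; ext u; simp [hSdef, mem_Ico]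
    have : ∀ s : ℝ, volume (Prod.mk s ⁻¹' S) = ENNReal.ofReal δ := by
      intro s; rw [hsect s, Real.volume_Ico]; congr 1; ring
    rw [lintegral_congr this, lintegral_const]
    exact ENNReal.mul_lt_top ENNReal.ofReal_lt_top (measure_lt_top _ _)
  set k : ℝ × ℝ → ℂ := fun p => g p.2 * S.indicator (1 : ℝ × ℝ → ℂ) p with hk
  have hkm : Measurable k := (hgm.comp measurable_snd).mul (measurable_one.indicator hS)
  have hki : Integrable k (ν.prod volume) := by
    have hdom : Integrable (S.indicator fun _ => max C 0) (ν.prod volume) :=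
      (integrable_indicator_iff hS).mpr ((integrableOn_const_iff).mpr (Or.inr hSfin))
    apply Integrable.mono' hdom hkm.aestronglyMeasurable
    apply Filter.Eventually.of_forall
    intro p
    by_cases hp : p ∈ S
    · have h1 : (S.indicator (fun _ => max C 0)) p = max C 0 := indicator_of_mem hp _
      have h2 : k p = g p.2 := by
        rw [hk]; dsimp only; rw [indicator_of_mem hp]; simp
      rw [h1, h2]
      exact le_max_of_le_left (hgb p.2)
    · have h1 : (S.indicator (fun _ => max C 0)) p = 0 := indicator_of_notMem hp _
      have h2 : k p = 0 := by
        rw [hk]; dsimp only; rw [indicator_of_notMem hp, mul_zero]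
      rw [h1, h2, norm_zero]
  have hswap := integral_integral_swap (f := fun s u => k (s, u)) (μ := ν) (ν := volume) hki
  calc ∫ s, (∫ u, g u * (Ico (a+s) (a+δ+s)).indicator (1 : ℝ → ℂ) u) ∂ν
      = ∫ s, (∫ u, k (s, u)) ∂ν := by
        apply integral_congr_ae; apply Filter.Eventually.of_forall; intro s
        apply integral_congr_ae; apply Filter.Eventually.of_forall; intro u
        show g u * (Ico (a+s) (a+δ+s)).indicator (1 : ℝ → ℂ) u = g u * S.indicator 1 (s, u)
        rw [indIco]
    _ = ∫ u, (∫ s, k (s, u) ∂ν) := hswap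
    _ = ∫ u, (ν (Ioc (u-a-δ) (u-a))).toReal • g u := by
        apply integral_congr_ae; apply Filter.Eventually.of_forall; intro u
        show (∫ s, k (s, u) ∂ν) = (ν (Ioc (u-a-δ) (u-a))).toReal • g u
        have : ∀ s, k (s, u) = (Ioc (u-a-δ) (u-a)).indicator (fun _ => g u) s := by
          intro s
          rw [hk]; dsimp only
          by_cases hs : s ∈ Ioc (u-a-δ) (u-a)
          · rw [indicator_of_mem hs, indicator_of_mem (by
              simp only [hSdef, mem_setOf_eq]
              rw [mem_Ioc] at hs
              constructor <;> linarith [hs.1, hs.2])]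
            simp
          · rw [indicator_of_notMem hs, indicator_of_notMem (by
              intro hmem
              apply hs
              simp only [hSdef, mem_setOf_eq] at hmem
              rw [mem_Ioc]
              constructor <;> linarith [hmem.1, hmem.2]), mul_zero]
        rw [integral_congr_ae (Filter.Eventually.of_forall this)]
        rw [integral_indicator_const (g u) measurableSet_Ioc]
        rfl

lemma r_eq (ν : Measure ℝ) [IsFiniteMeasure ν] (a δ : ℝ) (hδ : 0 ≤ δ) (u : ℝ) :
    (ν (Ioc (u-a-δ) (u-a))).toReal
      = (ν (Iic (u-a))).toReal - (ν (Iic (u-a-δ))).toReal := by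
  have hle : u - a - δ ≤ u - a := by linarith
  have hdisj : ν (Iic (u-a)) = ν (Iic (u-a-δ)) + ν (Ioc (u-a-δ) (u-a)) := by
    rw [← Iic_union_Ioc_eq_Iic hle, measure_union (Set.Iic_disjoint_Ioc le_rfl) measurableSet_Ioc]
  rw [hdisj, ENNReal.toReal_add (measure_ne_top _ _) (measure_ne_top _ _)]
  ring

lemma cdf_meas (ν : Measure ℝ) [IsFiniteMeasure ν] (b : ℝ) :
    Measurable (fun u : ℝ => (ν (Iic (u - b))).toReal) := by
  apply Monotone.measurable
  intro x y hxy
  exact ENNReal.toReal_mono (measure_ne_top _ _)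
    (measure_mono (Iic_subset_Iic.mpr (by linarith)))

lemma r_meas (ν : Measure ℝ) [IsFiniteMeasure ν] (a δ : ℝ) (hδ : 0 ≤ δ) :
    Measurable (fun u : ℝ => (ν (Ioc (u-a-δ) (u-a))).toReal) := by
  have : (fun u : ℝ => (ν (Ioc (u-a-δ) (u-a))).toReal)
      = fun u => (ν (Iic (u-a))).toReal - (ν (Iic (u - (a+δ)))).toReal := by
    funext u
    rw [r_eq ν a δ hδ u]
    congr 3
    ring
  rw [this]
  exact (cdf_meas ν a).sub (cdf_meas ν (a+δ))

lemma r_bdd (ν : Measure ℝ) [IsFiniteMeasure ν] (E : Set ℝ) :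
    (ν E).toReal ≤ (ν univ).toReal :=
  ENNReal.toReal_mono (measure_ne_top _ _) (measure_mono (subset_univ E))

/-- The value `μ E` computed through the Jordan decompositions. -/
def jval (c : ComplexMeasure ℝ) (E : Set ℝ) : ℂ :=
  (((c.re.toJordanDecomposition.posPart E).toReal
      - (c.re.toJordanDecomposition.negPart E).toReal : ℝ) : ℂ)
    + Complex.I * (((c.im.toJordanDecomposition.posPart E).toReal
      - (c.im.toJordanDecomposition.negPart E).toReal : ℝ) : ℂ)

lemma jval_eq_zero_iff (c : ComplexMeasure ℝ) (E : Set ℝ) :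
    jval c E = 0 ↔ ((c.re.toJordanDecomposition.posPart E).toReal
        = (c.re.toJordanDecomposition.negPart E).toReal
      ∧ (c.im.toJordanDecomposition.posPart E).toReal
        = (c.im.toJordanDecomposition.negPart E).toReal) := by
  rw [jval, Complex.ext_iff]
  simp only [Complex.add_re, Complex.ofReal_re, Complex.mul_re, Complex.I_re, Complex.I_im,
    Complex.ofReal_im, Complex.add_im, Complex.mul_im, Complex.zero_re, Complex.zero_im]
  constructor
  · rintro ⟨h1, h2⟩; constructor <;> [skip; skip] <;> nlinarith [h1, h2]
  · rintro ⟨h1, h2⟩; constructor <;> nlinarith [h1, h2]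

/-- From the derivation identity and Step A, the `cInt` of translated-window averages
vanishes. -/
lemma hz_of_hder (T : L1loc →ₗ[ℂ] L1loc) (μ : ℕ → ComplexMeasure ℝ)
    (hder : ∀ (F : L1loc) (n : ℕ) (g : ℝ → ℂ), Measurable g →
      (∃ C : ℝ, ∀ t, ‖g t‖ ≤ C) → (∀ t : ℝ, t ∉ Ico (0 : ℝ) (n : ℝ) → g t = 0) →
      (∫ t, g t * ((T F).1 n : ℝ → ℂ) t ∂(volume.restrict (Ico (0 : ℝ) (n : ℝ)))) =
        cInt (μ n) fun s =>
          ∫ t, g (t + s) * ((t : ℂ) * ((F.1 n : ℝ → ℂ) t))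
            ∂(volume.restrict (Ico (0 : ℝ) (n : ℝ))))
    (N : ℕ) (hN : ∀ F : L1loc, F.1 N = 0 → T F = 0)
    (m : ℕ) (a δ : ℝ) (ha : (N:ℝ) + 1 ≤ a) (hδ : 0 < δ) (hδ1 : δ ≤ 1) (ham : a + δ ≤ (m:ℝ))
    (g : ℝ → ℂ) (hgm : Measurable g) (hgb : ∃ C, ∀ t, ‖g t‖ ≤ C)
    (hgs : ∀ t : ℝ, t ∉ Ico (0:ℝ) (m:ℝ) → g t = 0) :
    cInt (μ m) (fun s => ∫ u, g u * (Ico (a+s) (a+δ+s)).indicator (1:ℝ→ℂ) u) = 0 := by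
  have ha1 : (1:ℝ) ≤ a := by
    have : (0:ℝ) ≤ (N:ℝ) := Nat.cast_nonneg N
    linarith
  set G : ℝ → ℂ := (Ico a (a+δ)).indicator (fun t => ((t:ℂ))⁻¹) with hG
  have hGm : Measurable G :=
    (Complex.measurable_ofReal.inv).indicator measurableSet_Ico
  have hGb : ∀ t, ‖G t‖ ≤ 1 := by
    intro t
    rw [hG]
    by_cases ht : t ∈ Ico a (a+δ)
    · rw [indicator_of_mem ht]
      rw [norm_inv, Complex.norm_real, Real.norm_eq_abs]
      rw [abs_of_nonneg (by linarith [ht.1] : (0:ℝ) ≤ t)]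
      rw [inv_le_one_iff₀]
      right; linarith [ht.1]
    · rw [indicator_of_notMem ht]; simp
  set Gel : L1loc := ofFun G hGm 1 hGb with hGel
  have hGel0 : Gel.1 N = 0 := by
    apply ofFun_eq_zero
    intro t ht
    rw [hG]
    apply indicator_of_notMem
    intro hmem
    have := hmem.1
    have := ht.2
    linarith
  have hTGel : T Gel = 0 := hN _ hGel0
  have h := hder Gel m g hgm hgb hgs
  have hLHS : (∫ t, g t * ((T Gel).1 m : ℝ → ℂ) t
      ∂(volume.restrict (Ico (0 : ℝ) (m : ℝ)))) = 0 := by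
    rw [hTGel]
    have h0 : (((0:L1loc)).1 m : ℝ → ℂ)
        =ᵐ[volume.restrict (Ico (0 : ℝ) (m : ℝ))] 0 := Lp.coeFn_zero ℂ 1 _
    have hz : (fun t => g t * ((0:L1loc).1 m : ℝ → ℂ) t)
        =ᵐ[volume.restrict (Ico (0 : ℝ) (m : ℝ))] (fun _ => (0:ℂ)) := by
      filter_upwards [h0] with t ht
      show g t * ((0:L1loc).1 m : ℝ → ℂ) t = 0
      rw [ht]; simp
    rw [integral_congr_ae hz]
    simp
  have hinner : ∀ s : ℝ, (∫ t, g (t + s) * ((t : ℂ) * ((Gel.1 m : ℝ → ℂ) t))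
      ∂(volume.restrict (Ico (0 : ℝ) (m : ℝ))))
      = ∫ u, g u * (Ico (a+s) (a+δ+s)).indicator (1:ℝ→ℂ) u := by
    intro s
    have step1 : (∫ t, g (t + s) * ((t : ℂ) * ((Gel.1 m : ℝ → ℂ) t))
        ∂(volume.restrict (Ico (0 : ℝ) (m : ℝ))))
        = ∫ t, g (t + s) * ((t : ℂ) * G t) ∂(volume.restrict (Ico (0 : ℝ) (m : ℝ))) := by
      apply integral_congr_ae
      filter_upwards [ofFun_coe G hGm 1 hGb m] with t ht
      show g (t + s) * ((t : ℂ) * ((Gel.1 m : ℝ → ℂ) t)) = g (t + s) * ((t : ℂ) * G t)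
      rw [show ((Gel.1 m : ℝ → ℂ) t) = G t from ht]
    have hind : ∀ t : ℝ, (t : ℂ) * G t = (Ico a (a+δ)).indicator (1:ℝ→ℂ) t := by
      intro t
      rw [hG]
      by_cases ht : t ∈ Ico a (a+δ)
      · rw [indicator_of_mem ht, indicator_of_mem ht]
        have htpos : (0:ℝ) < t := by linarith [ht.1]
        rw [Pi.one_apply]
        exact mul_inv_cancel₀ (by exact_mod_cast ne_of_gt htpos)
      · rw [indicator_of_notMem ht, indicator_of_notMem ht, mul_zero]
    have step2 : (∫ t, g (t + s) * ((t : ℂ) * G t) ∂(volume.restrict (Ico (0 : ℝ) (m : ℝ))))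
        = ∫ t, g (t + s) * (Ico a (a+δ)).indicator (1:ℝ→ℂ) t
          ∂(volume.restrict (Ico (0 : ℝ) (m : ℝ))) := by
      apply integral_congr_ae; apply Filter.Eventually.of_forall; intro t
      show g (t + s) * ((t : ℂ) * G t) = g (t + s) * (Ico a (a+δ)).indicator (1:ℝ→ℂ) t
      rw [hind t]
    have step3 : (∫ t, g (t + s) * (Ico a (a+δ)).indicator (1:ℝ→ℂ) t
          ∂(volume.restrict (Ico (0 : ℝ) (m : ℝ))))
        = ∫ t, g (t + s) * (Ico a (a+δ)).indicator (1:ℝ→ℂ) t := by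
      apply setIntegral_eq_integral_of_forall_compl_eq_zero
      intro t ht
      have : t ∉ Ico a (a+δ) := by
        intro hmem
        exact ht ⟨by linarith [hmem.1], by linarith [hmem.2]⟩
      rw [indicator_of_notMem this, mul_zero]
    have step4 : (∫ t, g (t + s) * (Ico a (a+δ)).indicator (1:ℝ→ℂ) t)
        = ∫ u, g u * (Ico (a+s) (a+δ+s)).indicator (1:ℝ→ℂ) u := by
      have := integral_add_right_eq_self (μ := (volume : Measure ℝ))
        (fun u => g u * (Ico (a+s) (a+δ+s)).indicator (1:ℝ→ℂ) u) s
      rw [← this]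
      apply integral_congr_ae; apply Filter.Eventually.of_forall; intro t
      dsimp only
      congr 1
      by_cases ht : t ∈ Ico a (a+δ)
      · rw [indicator_of_mem ht, indicator_of_mem
          (by rw [mem_Ico] at ht ⊢; constructor <;> linarith [ht.1, ht.2])]
        rfl
      · rw [indicator_of_notMem ht, indicator_of_notMem
          (by rw [mem_Ico] at ht ⊢; intro hc; exact ht ⟨by linarith [hc.1], by linarith [hc.2]⟩)]
    rw [step1, step2, step3, step4]
  have hfequ : (fun s => ∫ t, g (t + s) * ((t : ℂ) * ((Gel.1 m : ℝ → ℂ) t))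
      ∂(volume.restrict (Ico (0 : ℝ) (m : ℝ))))
      = fun s => ∫ u, g u * (Ico (a+s) (a+δ+s)).indicator (1:ℝ→ℂ) u := funext hinner
  rw [hLHS, hfequ] at h
  exact h.symm

lemma jval_meas (c : ComplexMeasure ℝ) (a δ : ℝ) (hδ : 0 ≤ δ) :
    Measurable (fun u : ℝ => jval c (Ioc (u-a-δ) (u-a))) := by
  unfold jval
  apply Measurable.add
  · exact Complex.measurable_ofReal.comp ((r_meas _ a δ hδ).sub (r_meas _ a δ hδ))
  · exact measurable_const.mul
      (Complex.measurable_ofReal.comp ((r_meas _ a δ hδ).sub (r_meas _ a δ hδ)))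

def jbound (c : ComplexMeasure ℝ) : ℝ :=
  (c.re.toJordanDecomposition.posPart univ).toReal
    + (c.re.toJordanDecomposition.negPart univ).toReal
    + ((c.im.toJordanDecomposition.posPart univ).toReal
    + (c.im.toJordanDecomposition.negPart univ).toReal)

lemma jval_bdd (c : ComplexMeasure ℝ) (E : Set ℝ) : ‖jval c E‖ ≤ jbound c := by
  unfold jval jbound
  apply le_trans (norm_add_le _ _)
  have habs : ∀ (ν ν' : Measure ℝ) [IsFiniteMeasure ν] [IsFiniteMeasure ν'],
      |(ν E).toReal - (ν' E).toReal| ≤ (ν univ).toReal + (ν' univ).toReal := by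
    intro ν ν' _ _
    rw [abs_le]
    have h1 := r_bdd ν' E
    have h2 := ENNReal.toReal_nonneg (a := ν E)
    have h3 := r_bdd ν E
    have h4 := ENNReal.toReal_nonneg (a := ν' E)
    constructor <;> linarith
  apply add_le_add
  · rw [Complex.norm_real, Real.norm_eq_abs]
    exact habs _ _
  · rw [norm_mul, Complex.norm_I, one_mul, Complex.norm_real, Real.norm_eq_abs]
    exact habs _ _

lemma smul_integrable (ν : Measure ℝ) [IsFiniteMeasure ν] {g : ℝ → ℂ} (hgm : Measurable g)
    {C : ℝ} (hC : ∀ t, ‖g t‖ ≤ C) {m : ℝ} (hgs : ∀ t, t ∉ Ico (0:ℝ) m → g t = 0)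
    (a δ : ℝ) (hδ : 0 ≤ δ) :
    Integrable (fun u => (ν (Ioc (u-a-δ) (u-a))).toReal • g u) volume := by
  have hCn : 0 ≤ C := le_trans (norm_nonneg _) (hC 0)
  have hdom : Integrable ((Ico (0:ℝ) m).indicator (fun _ => (ν univ).toReal * C)) volume := by
    refine (integrable_indicator_iff measurableSet_Ico).mpr ((integrableOn_const_iff).mpr (Or.inr ?_))
    rw [Real.volume_Ico]
    exact ENNReal.ofReal_lt_top
  apply Integrable.mono' hdom ((r_meas ν a δ hδ).smul hgm).aestronglyMeasurable
  apply Filter.Eventually.of_forall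
  intro u
  show ‖(ν (Ioc (u-a-δ) (u-a))).toReal • g u‖ ≤ _
  by_cases hu : u ∈ Ico (0:ℝ) m
  · rw [indicator_of_mem hu, norm_smul, Real.norm_eq_abs,
      abs_of_nonneg ENNReal.toReal_nonneg]
    exact mul_le_mul (r_bdd ν _) (hC u) (norm_nonneg _) ENNReal.toReal_nonneg
  · rw [indicator_of_notMem hu, hgs u hu, smul_zero, norm_zero]

lemma ae_jval_zero (μm : ComplexMeasure ℝ) (m : ℕ) (a δ : ℝ) (hδ : 0 < δ) (hδ1 : δ ≤ 1)
    (hz : ∀ g : ℝ → ℂ, Measurable g → (∃ C, ∀ t, ‖g t‖ ≤ C) →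
      (∀ t, t ∉ Ico (0:ℝ) (m:ℝ) → g t = 0) →
      cInt μm (fun s => ∫ u, g u * (Ico (a+s) (a+δ+s)).indicator (1:ℝ→ℂ) u) = 0) :
    ∀ᵐ u ∂(volume.restrict (Ico (0:ℝ) (m:ℝ))), jval μm (Ioc (u-a-δ) (u-a)) = 0 := by
  set f : ℝ → ℂ := fun u => jval μm (Ioc (u-a-δ) (u-a)) with hf
  have hfm : Measurable f := jval_meas μm a δ hδ.le
  have hfi : Integrable f (volume.restrict (Ico (0:ℝ) (m:ℝ))) := by
    apply Integrable.mono' (integrable_const (jbound μm)) hfm.aestronglyMeasurable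
    exact Filter.Eventually.of_forall fun u => jval_bdd μm _
  have key : ∀ g : ℝ → ℂ, Measurable g → (∃ C, ∀ t, ‖g t‖ ≤ C) →
      (∀ t, t ∉ Ico (0:ℝ) (m:ℝ) → g t = 0) →
      ∫ t, g t * f t ∂(volume.restrict (Ico (0:ℝ) (m:ℝ))) = 0 := by
    intro g hgm hgbb hgs
    obtain ⟨C, hC⟩ := hgbb
    have h0 := hz g hgm ⟨C, hC⟩ hgs
    simp only [cInt] at h0
    rw [swap_one _ hgm hC a δ hδ, swap_one _ hgm hC a δ hδ, swap_one _ hgm hC a δ hδ,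
      swap_one _ hgm hC a δ hδ] at h0
    have hi₁ := smul_integrable μm.re.toJordanDecomposition.posPart hgm hC hgs a δ hδ.le
    have hi₂ := smul_integrable μm.re.toJordanDecomposition.negPart hgm hC hgs a δ hδ.le
    have hi₃ := smul_integrable μm.im.toJordanDecomposition.posPart hgm hC hgs a δ hδ.le
    have hi₄ := smul_integrable μm.im.toJordanDecomposition.negPart hgm hC hgs a δ hδ.le
    have hpt : ∀ u, g u * f u
        = ((μm.re.toJordanDecomposition.posPart (Ioc (u-a-δ) (u-a))).toReal • g u
            - (μm.re.toJordanDecomposition.negPart (Ioc (u-a-δ) (u-a))).toReal • g u)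
          + Complex.I • ((μm.im.toJordanDecomposition.posPart (Ioc (u-a-δ) (u-a))).toReal • g u
            - (μm.im.toJordanDecomposition.negPart (Ioc (u-a-δ) (u-a))).toReal • g u) := by
      intro u
      simp only [hf, jval, Complex.real_smul, smul_eq_mul]
      push_cast
      ring
    calc ∫ t, g t * f t ∂(volume.restrict (Ico (0:ℝ) (m:ℝ)))
        = ∫ t, g t * f t := setIntegral_eq_integral_of_forall_compl_eq_zero
          (fun t ht => by rw [hgs t ht, zero_mul])
      _ = ((∫ u, (μm.re.toJordanDecomposition.posPart (Ioc (u-a-δ) (u-a))).toReal • g u)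
            - ∫ u, (μm.re.toJordanDecomposition.negPart (Ioc (u-a-δ) (u-a))).toReal • g u)
          + Complex.I * ((∫ u, (μm.im.toJordanDecomposition.posPart (Ioc (u-a-δ) (u-a))).toReal • g u)
            - ∫ u, (μm.im.toJordanDecomposition.negPart (Ioc (u-a-δ) (u-a))).toReal • g u) := by
          rw [integral_congr_ae (Filter.Eventually.of_forall hpt)]
          have hsub1 : Integrable (fun u =>
              (μm.re.toJordanDecomposition.posPart (Ioc (u-a-δ) (u-a))).toReal • g u
              - (μm.re.toJordanDecomposition.negPart (Ioc (u-a-δ) (u-a))).toReal • g u)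
              volume := hi₁.sub hi₂
          have hsub2 : Integrable (fun u => Complex.I •
              ((μm.im.toJordanDecomposition.posPart (Ioc (u-a-δ) (u-a))).toReal • g u
              - (μm.im.toJordanDecomposition.negPart (Ioc (u-a-δ) (u-a))).toReal • g u))
              volume := (hi₃.sub hi₄).smul Complex.I
          rw [integral_add hsub1 hsub2]
          rw [integral_sub hi₁ hi₂, integral_smul, integral_sub hi₃ hi₄, smul_eq_mul]
      _ = 0 := h0
  have := sep hfm hfi key
  filter_upwards [this] with u hu
  exact hu

lemma pair (P Q : Measure ℝ) [IsFiniteMeasure P] [IsFiniteMeasure Q]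
    (A m n : ℕ) (hmn : n + A + 2 ≤ m) (u : ℝ) (hu1 : (m:ℝ) - 1 < u) (hu2 : u < m)
    (h : ∀ a δ : ℚ, (A:ℝ) ≤ (a:ℝ) → (0:ℝ) < (δ:ℝ) → (δ:ℝ) ≤ 1 → (a:ℝ) + (δ:ℝ) ≤ (m:ℝ) →
      P (Ioc (u-(a:ℝ)-(δ:ℝ)) (u-(a:ℝ))) = Q (Ioc (u-(a:ℝ)-(δ:ℝ)) (u-(a:ℝ))))
    {E : Set ℝ} (hE : MeasurableSet E) (hEsub : E ⊆ Ico (0:ℝ) (n:ℝ)) : P E = Q E := by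
  have hmnR : (n:ℝ) + (A:ℝ) + 2 ≤ (m:ℝ) := by exact_mod_cast hmn
  have key : ∀ k : ℕ, ∀ a b : ℚ, (A:ℝ) ≤ (a:ℝ) → (b:ℝ) ≤ (m:ℝ) → a ≤ b → (b:ℝ) - (a:ℝ) ≤ k →
      P (Ioc (u-(b:ℝ)) (u-(a:ℝ))) = Q (Ioc (u-(b:ℝ)) (u-(a:ℝ))) := by
    intro k
    induction k with
    | zero =>
      intro a b ha hb hab hk
      have hba : (b:ℝ) = (a:ℝ) := le_antisymm (by push_cast at hk; linarith)
        (by exact_mod_cast hab)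
      rw [show u - (b:ℝ) = u - (a:ℝ) by rw [hba], Set.Ioc_self]
      simp
    | succ k ih =>
      intro a b ha hb hab hk
      rcases eq_or_lt_of_le hab with heq | hlt
      · rw [show u - (b:ℝ) = u - (a:ℝ) by rw [← heq], Set.Ioc_self]
        simp
      · have hltR : (a:ℝ) < (b:ℝ) := by exact_mod_cast hlt
        by_cases hle : (b:ℝ) - (a:ℝ) ≤ 1
        · have hres := h a (b - a) ha (by push_cast; linarith) (by push_cast; linarith)
            (by push_cast; linarith)
          have hset : u - (a:ℝ) - ((b-a:ℚ):ℝ) = u - (b:ℝ) := by push_cast; ring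
          rw [hset] at hres
          exact hres
        · set c : ℚ := b - 1 with hc
          have hcR : (c:ℝ) = (b:ℝ) - 1 := by rw [hc]; push_cast; ring
          have hac : a ≤ c := by
            rw [← Rat.cast_le (K := ℝ)]
            rw [hcR]; linarith
          have hsplit : Ioc (u-(b:ℝ)) (u-(a:ℝ))
              = Ioc (u-(b:ℝ)) (u-(c:ℝ)) ∪ Ioc (u-(c:ℝ)) (u-(a:ℝ)) :=
            (Ioc_union_Ioc_eq_Ioc (by rw [hcR]; linarith)
              (by rw [hcR]; push_cast at hle ⊢; linarith)).symm
          rw [hsplit, measure_union (Set.Ioc_disjoint_Ioc_of_le le_rfl) measurableSet_Ioc,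
            measure_union (Set.Ioc_disjoint_Ioc_of_le le_rfl) measurableSet_Ioc]
          congr 1
          · have hres := h c 1 (by rw [hcR]; push_cast at hle ⊢; linarith)
              (by norm_num) (by norm_num) (by rw [hcR]; push_cast; linarith)
            have hset : u - (c:ℝ) - ((1:ℚ):ℝ) = u - (b:ℝ) := by rw [hcR]; push_cast; ring
            rw [hset] at hres
            exact hres
          · exact ih a c ha (by rw [hcR]; linarith) hac (by rw [hcR]; push_cast at hk ⊢; linarith)
  have hqq : ∀ a b : ℚ, (A:ℝ) ≤ (a:ℝ) → (b:ℝ) ≤ (m:ℝ) →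
      P (Ioc (u-(b:ℝ)) (u-(a:ℝ))) = Q (Ioc (u-(b:ℝ)) (u-(a:ℝ))) := by
    intro a b ha hb
    rcases le_or_gt a b with hab | hba
    · refine key ⌈b - a⌉₊ a b ha hb hab ?_
      have h1 : (b - a : ℚ) ≤ (⌈b - a⌉₊ : ℚ) := Nat.le_ceil _
      have : ((b - a : ℚ) : ℝ) ≤ ((⌈b - a⌉₊ : ℚ) : ℝ) := by exact_mod_cast h1
      push_cast at this ⊢
      linarith
    · have : Ioc (u-(b:ℝ)) (u-(a:ℝ)) = ∅ := by
        apply Set.Ioc_eq_empty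
        have : (a:ℝ) > (b:ℝ) := by exact_mod_cast hba
        intro hcon
        linarith
      rw [this]
      simp
  obtain ⟨b₁, hb₁u, hb₁m⟩ := exists_rat_btwn hu2
  have hAn : (A:ℝ) + (n:ℝ) + 1 < u := by
    have h0 : (0:ℝ) ≤ (n:ℝ) := Nat.cast_nonneg n
    linarith
  have haveIoc : ∀ t : ℝ, t ≤ u - (A:ℝ) →
      P (Ioc (u - (b₁:ℝ)) t) = Q (Ioc (u - (b₁:ℝ)) t) := by
    intro t ht
    rcases eq_or_lt_of_le ht with hteq | htlt
    · subst hteq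
      have hres := hqq ((A:ℕ):ℚ) b₁ (by push_cast; exact le_rfl) (le_of_lt hb₁m)
      have hset : u - (((A:ℕ):ℚ):ℝ) = u - (A:ℝ) := by push_cast; ring
      rw [hset] at hres
      exact hres
    · set ι := {q : ℚ // (A:ℝ) ≤ (q:ℝ) ∧ (q:ℝ) < u - t} with hι
      haveI : Nonempty ι := ⟨⟨((A:ℕ):ℚ), by push_cast; exact le_rfl, by push_cast; linarith⟩⟩
      set s : ι → Set ℝ := fun q => Ioc (u - (b₁:ℝ)) (u - ((q.1:ℚ):ℝ)) with hs
      have hs1 : ∀ μ' : Measure ℝ, ∀ i : ι, NullMeasurableSet (s i) μ' :=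
        fun μ' i => measurableSet_Ioc.nullMeasurableSet
      have hdir : Directed (fun x1 x2 => x1 ⊇ x2) s := by
        intro i j
        refine ⟨⟨max i.1 j.1, ?_, ?_⟩, ?_, ?_⟩
        · rcases max_cases i.1 j.1 with ⟨hmx, _⟩ | ⟨hmx, _⟩ <;> rw [hmx]
          exacts [i.2.1, j.2.1]
        · rcases max_cases i.1 j.1 with ⟨hmx, _⟩ | ⟨hmx, _⟩ <;> rw [hmx]
          exacts [i.2.2, j.2.2]
        · apply Ioc_subset_Ioc_right
          have : (i.1:ℝ) ≤ ((max i.1 j.1 : ℚ):ℝ) := by exact_mod_cast le_max_left i.1 j.1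
          linarith
        · apply Ioc_subset_Ioc_right
          have : (j.1:ℝ) ≤ ((max i.1 j.1 : ℚ):ℝ) := by exact_mod_cast le_max_right i.1 j.1
          linarith
      have hInter : (⋂ i, s i) = Ioc (u - (b₁:ℝ)) t := by
        ext x
        simp only [hs, mem_iInter, mem_Ioc]
        constructor
        · intro hx
          obtain ⟨i0⟩ := (inferInstance : Nonempty ι)
          refine ⟨(hx i0).1, ?_⟩
          by_contra hxt
          push_neg at hxt
          have hlt : max (u - x) (A:ℝ) < u - t := by
            rw [max_lt_iff]
            exact ⟨by linarith, by linarith⟩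
          obtain ⟨q, hq1, hq2⟩ := exists_rat_btwn hlt
          rw [max_lt_iff] at hq1
          have := (hx ⟨q, le_of_lt hq1.2, hq2⟩).2
          linarith [hq1.1]
        · intro hx i
          have := i.2.2
          exact ⟨hx.1, by linarith [hx.2]⟩
      have hne : ∃ i : ι, P (s i) ≠ ⊤ := by
        obtain ⟨i0⟩ := (inferInstance : Nonempty ι)
        exact ⟨i0, measure_ne_top _ _⟩
      have hne' : ∃ i : ι, Q (s i) ≠ ⊤ := by
        obtain ⟨i0⟩ := (inferInstance : Nonempty ι)
        exact ⟨i0, measure_ne_top _ _⟩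
      have hP := hdir.measure_iInter (μ := P) (hs1 P) hne
      have hQ := hdir.measure_iInter (μ := Q) (hs1 Q) hne'
      rw [hInter] at hP hQ
      rw [hP, hQ]
      apply iInf_congr
      intro i
      exact hqq i.1 b₁ i.2.1 (le_of_lt hb₁m)
  have hEsub' : E ⊆ Ioc (u - (b₁:ℝ)) (u - (A:ℝ)) := by
    intro x hx
    obtain ⟨hx0, hxn⟩ := hEsub hx
    constructor
    · linarith
    · linarith
  have hres : P.restrict (Ioc (u-(b₁:ℝ)) (u-(A:ℝ))) = Q.restrict (Ioc (u-(b₁:ℝ)) (u-(A:ℝ))) := by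
    apply Measure.ext_of_Iic
    intro t
    rw [Measure.restrict_apply measurableSet_Iic, Measure.restrict_apply measurableSet_Iic]
    have hint : Iic t ∩ Ioc (u-(b₁:ℝ)) (u-(A:ℝ)) = Ioc (u-(b₁:ℝ)) (min t (u-(A:ℝ))) := by
      ext x
      simp only [mem_inter_iff, mem_Iic, mem_Ioc, le_min_iff]
      tauto
    rw [hint]
    exact haveIoc _ (min_le_right _ _)
  calc P E = P.restrict (Ioc (u-(b₁:ℝ)) (u-(A:ℝ))) E := by
        rw [Measure.restrict_apply hE, inter_eq_self_of_subset_left hEsub']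
    _ = Q.restrict (Ioc (u-(b₁:ℝ)) (u-(A:ℝ))) E := by rw [hres]
    _ = Q E := by rw [Measure.restrict_apply hE, inter_eq_self_of_subset_left hEsub']

lemma mu_zero (T : L1loc →ₗ[ℂ] L1loc) (μ : ℕ → ComplexMeasure ℝ)
    (hconc : ∀ n : ℕ, ConcOn (μ n) (Ico 0 (n : ℝ)))
    (hcompat : ∀ (n : ℕ) (E : Set ℝ), MeasurableSet E → E ⊆ Ico (0 : ℝ) (n : ℝ) →
      μ (n + 1) E = μ n E)
    (hder : ∀ (F : L1loc) (n : ℕ) (g : ℝ → ℂ), Measurable g →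
      (∃ C : ℝ, ∀ t, ‖g t‖ ≤ C) → (∀ t : ℝ, t ∉ Ico (0 : ℝ) (n : ℝ) → g t = 0) →
      (∫ t, g t * ((T F).1 n : ℝ → ℂ) t ∂(volume.restrict (Ico (0 : ℝ) (n : ℝ)))) =
        cInt (μ n) fun s =>
          ∫ t, g (t + s) * ((t : ℂ) * ((F.1 n : ℝ → ℂ) t))
            ∂(volume.restrict (Ico (0 : ℝ) (n : ℝ))))
    (N : ℕ) (hN : ∀ F : L1loc, F.1 N = 0 → T F = 0) (n : ℕ) : μ n = 0 := by
  have chain : ∀ k : ℕ, ∀ E : Set ℝ, MeasurableSet E → E ⊆ Ico (0:ℝ) (n:ℝ) →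
      μ (n + k) E = μ n E := by
    intro k
    induction k with
    | zero => intro E _ _; rfl
    | succ k ih =>
      intro E hE hEs
      have hsub : E ⊆ Ico (0:ℝ) ((n + k : ℕ):ℝ) := by
        refine hEs.trans (Ico_subset_Ico_right ?_)
        exact_mod_cast Nat.le_add_right n k
      rw [show n + (k+1) = (n+k)+1 from rfl, hcompat (n+k) E hE hsub]
      exact ih E hE hEs
  set A : ℕ := N + 1 with hA
  set m : ℕ := n + (A + 2) with hm
  have hmge : n + A + 2 ≤ m := by omega
  have hm1 : (1:ℝ) ≤ (m:ℝ) := by exact_mod_cast Nat.one_le_iff_ne_zero.mpr (by omega)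
  -- the property P u
  set Pu : ℝ → Prop := fun u => ∀ p : ℚ × ℚ,
      (A:ℝ) ≤ (p.1:ℝ) → (0:ℝ) < (p.2:ℝ) → (p.2:ℝ) ≤ 1 → (p.1:ℝ) + (p.2:ℝ) ≤ (m:ℝ) →
        jval (μ m) (Ioc (u - (p.1:ℝ) - (p.2:ℝ)) (u - (p.1:ℝ))) = 0 with hPu
  have hae : ∀ᵐ u ∂(volume.restrict (Ico (0:ℝ) (m:ℝ))), Pu u := by
    rw [hPu, ae_all_iff]
    intro p
    by_cases hc : (A:ℝ) ≤ (p.1:ℝ) ∧ (0:ℝ) < (p.2:ℝ) ∧ (p.2:ℝ) ≤ 1 ∧ (p.1:ℝ) + (p.2:ℝ) ≤ (m:ℝ)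
    · obtain ⟨h1, h2, h3, h4⟩ := hc
      have hz : ∀ g : ℝ → ℂ, Measurable g → (∃ C, ∀ t, ‖g t‖ ≤ C) →
          (∀ t, t ∉ Ico (0:ℝ) (m:ℝ) → g t = 0) →
          cInt (μ m) (fun s =>
            ∫ u', g u' * (Ico ((p.1:ℝ)+s) ((p.1:ℝ)+(p.2:ℝ)+s)).indicator (1:ℝ→ℂ) u') = 0 :=
        fun g hgm hgb hgs => hz_of_hder T μ hder N hN m p.1 p.2
          (by rw [hA] at h1; push_cast at h1 ⊢; linarith) h2 h3 h4 g hgm hgb hgs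
      filter_upwards [ae_jval_zero (μ m) m (p.1:ℝ) (p.2:ℝ) h2 h3 hz] with u hu
      intro _ _ _ _
      exact hu
    · apply Filter.Eventually.of_forall
      intro u h1 h2 h3 h4
      exact absurd ⟨h1, h2, h3, h4⟩ hc
  -- pick a good point u ∈ Ioo (m-1) m
  have hgood : ∃ u : ℝ, ((m:ℝ) - 1 < u ∧ u < (m:ℝ)) ∧ Pu u := by
    by_contra hcon
    push_neg at hcon
    have hsubset : Ioo ((m:ℝ)-1) (m:ℝ) ⊆ {u | ¬ Pu u} := by
      intro u hu
      exact hcon u ⟨hu.1, hu.2⟩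
    have h0 : volume.restrict (Ico (0:ℝ) (m:ℝ)) {u | ¬ Pu u} = 0 := by
      rw [ae_iff] at hae
      exact hae
    have h1 : volume.restrict (Ico (0:ℝ) (m:ℝ)) (Ioo ((m:ℝ)-1) (m:ℝ)) = 0 :=
      le_antisymm (h0 ▸ measure_mono hsubset) (by simp)
    rw [Measure.restrict_apply measurableSet_Ioo] at h1
    have hIooSub : Ioo ((m:ℝ)-1) (m:ℝ) ∩ Ico (0:ℝ) (m:ℝ) = Ioo ((m:ℝ)-1) (m:ℝ) := by
      apply inter_eq_self_of_subset_left
      intro x hx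
      exact ⟨by linarith [hx.1], hx.2⟩
    rw [hIooSub, Real.volume_Ioo] at h1
    have : (m:ℝ) - ((m:ℝ) - 1) = 1 := by ring
    rw [this] at h1
    simp at h1
  obtain ⟨u, ⟨hu1, hu2⟩, hPuu⟩ := hgood
  -- transfer to the two pairs of Jordan measures
  have hmE : ∀ E' : Set ℝ, MeasurableSet E' → E' ⊆ Ico (0:ℝ) (n:ℝ) → μ m E' = 0 := by
    intro E' hE' hE'sub
    have hpairRe : (μ m).re.toJordanDecomposition.posPart E'
        = (μ m).re.toJordanDecomposition.negPart E' := by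
      apply pair _ _ A m n hmge u hu1 hu2 _ hE' hE'sub
      intro a δ h1 h2 h3 h4
      have := (jval_eq_zero_iff (μ m) _).mp (hPuu (a, δ) h1 h2 h3 h4)
      exact (ENNReal.toReal_eq_toReal_iff' (measure_ne_top _ _) (measure_ne_top _ _)).mp this.1
    have hpairIm : (μ m).im.toJordanDecomposition.posPart E'
        = (μ m).im.toJordanDecomposition.negPart E' := by
      apply pair _ _ A m n hmge u hu1 hu2 _ hE' hE'sub
      intro a δ h1 h2 h3 h4
      have := (jval_eq_zero_iff (μ m) _).mp (hPuu (a, δ) h1 h2 h3 h4)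
      exact (ENNReal.toReal_eq_toReal_iff' (measure_ne_top _ _) (measure_ne_top _ _)).mp this.2
    have hre : ((μ m) E').re = 0 := by
      rw [← re_apply, signed_apply _ hE', hpairRe]
      ring
    have him : ((μ m) E').im = 0 := by
      rw [← im_apply, signed_apply _ hE', hpairIm]
      ring
    exact Complex.ext (by rw [hre]; simp) (by rw [him]; simp)
  -- conclude μ n = 0
  apply VectorMeasure.ext
  intro E hE
  have hsplit : E = (E ∩ Ico (0:ℝ) (n:ℝ)) ∪ (E \ Ico (0:ℝ) (n:ℝ)) := by
    rw [inter_union_diff]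
  have hdisj : Disjoint (E ∩ Ico (0:ℝ) (n:ℝ)) (E \ Ico (0:ℝ) (n:ℝ)) := by
    rw [Set.disjoint_left]
    intro x hx hx'
    exact hx'.2 hx.2
  rw [hsplit, VectorMeasure.of_union hdisj (hE.inter measurableSet_Ico)
    (hE.diff measurableSet_Ico)]
  have hz1 : μ n (E ∩ Ico (0:ℝ) (n:ℝ)) = 0 := by
    have := chain (A + 2) (E ∩ Ico (0:ℝ) (n:ℝ)) (hE.inter measurableSet_Ico)
      inter_subset_right
    rw [← hm] at this
    rw [← this]
    exact hmE _ (hE.inter measurableSet_Ico) inter_subset_right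
  have hz2 : μ n (E \ Ico (0:ℝ) (n:ℝ)) = 0 := by
    apply hconc n _ (hE.diff measurableSet_Ico)
    intro x hx
    exact hx.2
  rw [hz1, hz2]
  simp

end S13

/-- There are no nonzero weakly compact derivations on `L¹_loc(ℝ⁺)`:
if `T` is a continuous linear operator on `L¹_loc` which is weakly compact and is a
derivation, i.e. `T = D_μ`, `D_μ f = (Xf) * μ`, for a locally finite complex Borel
measure `μ` on `ℝ⁺` (encoded as a compatible family `μ n = μ|_{[0,n)}`, the derivation
property being expressed by testing against bounded functions supported in `[0,n)`),
then `T = 0`. (In particular a weakly compact `T` is not injective unless `T = 0`.) -/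
theorem no_nonzero_weakly_compact_derivations (T : L1loc →ₗ[ℂ] L1loc)
    (hT : Continuous T)
    (hw : ∃ U ∈ nhds (0 : L1loc), IsCompact (@closure _ L1locWeak (⇑T '' U)))
    (μ : ℕ → ComplexMeasure ℝ)
    (hconc : ∀ n : ℕ, ConcOn (μ n) (Ico 0 (n : ℝ)))
    (hcompat : ∀ (n : ℕ) (E : Set ℝ), MeasurableSet E → E ⊆ Ico (0 : ℝ) (n : ℝ) →
      μ (n + 1) E = μ n E)
    (hder : ∀ (F : L1loc) (n : ℕ) (g : ℝ → ℂ), Measurable g →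
      (∃ C : ℝ, ∀ t, ‖g t‖ ≤ C) → (∀ t : ℝ, t ∉ Ico (0 : ℝ) (n : ℝ) → g t = 0) →
      (∫ t, g t * ((T F).1 n : ℝ → ℂ) t ∂(volume.restrict (Ico (0 : ℝ) (n : ℝ)))) =
        cInt (μ n) fun s =>
          ∫ t, g (t + s) * ((t : ℂ) * ((F.1 n : ℝ → ℂ) t))
            ∂(volume.restrict (Ico (0 : ℝ) (n : ℝ)))) :
    T = 0 := by
  obtain ⟨N, hN⟩ := S13.stepA T hw
  have hμ : ∀ k : ℕ, μ k = 0 := fun k => S13.mu_zero T μ hconc hcompat hder N hN k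
  apply LinearMap.ext
  intro F
  have hTF : ∀ k : ℕ, ((T F).1 k : LpIco k) = 0 := by
    intro k
    have hmk := Lp.aestronglyMeasurable ((T F).1 k)
    have hf'm : Measurable (hmk.mk ((T F).1 k : ℝ → ℂ)) :=
      hmk.stronglyMeasurable_mk.measurable
    have hae : (((T F).1 k : ℝ → ℂ))
        =ᵐ[volume.restrict (Ico (0:ℝ) (k:ℝ))] hmk.mk ((T F).1 k : ℝ → ℂ) := hmk.ae_eq_mk
    have hint : Integrable (hmk.mk ((T F).1 k : ℝ → ℂ))
        (volume.restrict (Ico (0:ℝ) (k:ℝ))) :=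
      (L1.integrable_coeFn ((T F).1 k)).congr hae
    have hkey : ∀ g : ℝ → ℂ, Measurable g → (∃ C, ∀ t, ‖g t‖ ≤ C) →
        (∀ t, t ∉ Ico (0:ℝ) (k:ℝ) → g t = 0) →
        ∫ t, g t * (hmk.mk ((T F).1 k : ℝ → ℂ)) t
          ∂(volume.restrict (Ico (0:ℝ) (k:ℝ))) = 0 := by
      intro g hgm hgb hgs
      have h1 : ∫ t, g t * (hmk.mk ((T F).1 k : ℝ → ℂ)) t
            ∂(volume.restrict (Ico (0:ℝ) (k:ℝ)))
          = ∫ t, g t * ((T F).1 k : ℝ → ℂ) t ∂(volume.restrict (Ico (0:ℝ) (k:ℝ))) := by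
        apply integral_congr_ae
        filter_upwards [hae] with t ht
        rw [ht]
      rw [h1, hder F k g hgm hgb hgs, hμ k, S13.cInt_zero_measure]
    have hzero := S13.sep hf'm hint hkey
    have hcoe0 : (((T F).1 k : ℝ → ℂ))
        =ᵐ[volume.restrict (Ico (0:ℝ) (k:ℝ))] 0 := hae.trans hzero
    exact Lp.eq_zero_iff_ae_eq_zero.mpr hcoe0
  have hval : (T F).1 = (0 : L1loc).1 := by
    funext k
    exact hTF k
  have hTF0 : T F = 0 := Subtype.ext hval
  rw [LinearMap.zero_apply]
  exact hTF0
end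
end
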